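/- For every β ∈ (0,∞) and h ∈ ℝ, the double limits P_{β,h}^{+,±}(a | ω) := lim_{n→∞} lim_{l→∞} ν_{β,h}^+( η₀ = a | η_i = ±1 for −(n+l) ≤ i ≤ −(n+1) and η_i = ω_i for −n ≤ i ≤ −1 ) exist for every past ω ∈ Ω_{<0} and every a ∈ {−1,+1}; the resulting functions P_{β,h}^{+,+} and P_{β,h}^{+,−} are g-functions which are attractive (i.e. ω ↦ P(+1|ω) is nondecreasing for the coordinatewise order on Ω_{<0}), and they satisfy P_{β,h}^{+,−}(+1 | ω) ≤ P_{β,h}^{+,+}(+1 | ω) for all ω ∈ Ω_{<0}. -/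

import Mathlib

open MeasureTheory Filter Topology ProbabilityTheory

noncomputable section

/-- Spin value of a Boolean spin: `true ↦ +1`, `false ↦ -1`. -/
def sval (b : Bool) : ℝ := if b then 1 else -1

/-- Two-dimensional spin configurations. -/
abbrev Cfg2 := ℤ × ℤ → Bool

/-- Two-sided sequences over an alphabet `A`. -/
abbrev ZSeq (A : Type*) := ℤ → A

/-- Pasts: index `k` corresponds to the coordinate `-(k+1)`. -/
abbrev Past (A : Type*) := ℕ → A

/-- The four nearest neighbours of a site of `ℤ²`. -/
def nbrs (x : ℤ × ℤ) : Finset (ℤ × ℤ) :=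
  {(x.1 + 1, x.2), (x.1 - 1, x.2), (x.1, x.2 + 1), (x.1, x.2 - 1)}

/-- Boltzmann weight
`exp(β[Σ_{{x,y}⊆Λ, x∼y} ω_x ω_y + Σ_{x∈Λ, y∉Λ, x∼y} ω_x σ_y] − h Σ_{x∈Λ} ω_x)`
(the sum over unordered pairs inside `Λ` is written as half the ordered sum). -/
def isingWeight (β h : ℝ) (Λ : Finset (ℤ × ℤ)) (σ ω : Cfg2) : ℝ :=
  Real.exp (β * ((∑ x ∈ Λ, ∑ y ∈ Λ.filter (fun y => y ∈ nbrs x),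
        sval (ω x) * sval (ω y)) / 2
      + ∑ x ∈ Λ, ∑ y ∈ (nbrs x).filter (fun y => y ∉ Λ), sval (ω x) * sval (σ y))
    - h * ∑ x ∈ Λ, sval (ω x))

/-- Fill in the values `τ` inside `Λ` and `σ` outside. -/
def fill (Λ : Finset (ℤ × ℤ)) (σ : Cfg2) (τ : ↥Λ → Bool) : Cfg2 :=
  fun x => if hx : x ∈ Λ then τ ⟨x, hx⟩ else σ x

/-- The finite-volume Ising measure in `Λ` with boundary condition `σ`, viewed as a measure on
the full configuration space, the spins outside `Λ` being frozen to `σ`. -/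
def isingFV (β h : ℝ) (Λ : Finset (ℤ × ℤ)) (σ : Cfg2) : Measure Cfg2 :=
  (∑ τ : ↥Λ → Bool, ENNReal.ofReal (isingWeight β h Λ σ (fill Λ σ τ)))⁻¹ •
    ∑ τ : ↥Λ → Bool,
      ENNReal.ofReal (isingWeight β h Λ σ (fill Λ σ τ)) • Measure.dirac (fill Λ σ τ)

/-- The box `[-n,n]²`. -/
def box (n : ℕ) : Finset (ℤ × ℤ) :=
  (Finset.Icc (-(n : ℤ)) (n : ℤ)) ×ˢ (Finset.Icc (-(n : ℤ)) (n : ℤ))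

/-- Convergence of a sequence of measures on a product space in the sense of convergence of the
measures of all finite-dimensional cylinder events; for probability measures on `{−1,+1}^ι`
this is exactly weak convergence. -/
def CylTendsto {ι A : Type*} [MeasurableSpace A] (μs : ℕ → Measure (ι → A))
    (μ : Measure (ι → A)) : Prop :=
  ∀ (s : Finset ι) (f : ι → A),
    Tendsto (fun n => μs n {η | ∀ i ∈ s, η i = f i}) atTop (𝓝 (μ {η | ∀ i ∈ s, η i = f i}))

/-- `μ` is the plus phase `μ_{β,h}^+`: the weak limit of the finite-volume Ising measures on
`[-n,n]²` with all-plus boundary conditions. -/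
def IsPlusPhase (β h : ℝ) (μ : Measure Cfg2) : Prop :=
  IsProbabilityMeasure μ ∧ CylTendsto (fun n => isingFV β h (box n) (fun _ => true)) μ

/-- `μ` is the minus phase `μ_{β,h}^-`. -/
def IsMinusPhase (β h : ℝ) (μ : Measure Cfg2) : Prop :=
  IsProbabilityMeasure μ ∧ CylTendsto (fun n => isingFV β h (box n) (fun _ => false)) μ

/-- The critical inverse temperature `β_c = ln(1+√2)/2`. -/
def betaCrit : ℝ := Real.log (1 + Real.sqrt 2) / 2

/-- Projection of a two-dimensional configuration onto the line `ℤ × {0}`. -/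
def lineProj (η : Cfg2) : ZSeq Bool := fun i => η (i, 0)

/-- The Schonmann projection of a measure on `{−1,+1}^{ℤ²}`. -/
def schonmann (μ : Measure Cfg2) : Measure (ZSeq Bool) := μ.map lineProj

/-- Restriction of a two-sided sequence to its strict past; index `k` is coordinate `-(k+1)`. -/
def restrictPast {A : Type*} (ω : ZSeq A) : Past A := fun k => ω (-(k + 1 : ℤ))

/-- The shift on two-sided sequences. -/
def shiftSeq {A : Type*} : ZSeq A → ZSeq A := fun ω i => ω (i + 1)

/-- The σ-algebra `ℱ_{<0}` generated by the coordinates of negative index. -/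
def pastSigma (A : Type*) [MeasurableSpace A] : MeasurableSpace (ZSeq A) :=
  MeasurableSpace.comap (fun ω : ZSeq A => restrictPast ω) inferInstance

/-- The σ-algebra generated by the coordinates in `S`. -/
def sigmaOn {ι A : Type*} [MeasurableSpace A] (S : Set ι) : MeasurableSpace (ι → A) :=
  MeasurableSpace.comap (fun ω : ι → A => S.restrict ω) inferInstance

/-- A g-function on the alphabet `A`: measurable, `[0,1]`-valued, normalized. -/
def IsGFunction {A : Type*} [Fintype A] [MeasurableSpace A] (P : A → Past A → ℝ) : Prop :=
  (∀ a, Measurable (P a)) ∧ ∀ ω, (∑ a : A, P a ω) = 1 ∧ ∀ a, P a ω ∈ Set.Icc (0 : ℝ) 1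

/-- `μ` is a translation-invariant g-measure consistent with the g-function `P`: for each `a`,
`ω ↦ P a (restrictPast ω)` is a version of the conditional probability `μ(X₀ = a | ℱ_{<0})`. -/
def IsGMeasure {A : Type*} [MeasurableSpace A] (μ : Measure (ZSeq A))
    (P : A → Past A → ℝ) : Prop :=
  IsProbabilityMeasure μ ∧ μ.map shiftSeq = μ ∧
    ∀ a : A, (fun ω => P a (restrictPast ω))
      =ᵐ[μ] μ[Set.indicator {ω : ZSeq A | ω 0 = a} (fun _ => (1 : ℝ)) | pastSigma A]

/-- The `k`-th variation of a g-function: the supremum of `|P a ω − P a σ|` over pasts agreeing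
on the coordinates `−k,…,−1`. -/
def varG {A : Type*} (P : A → Past A → ℝ) (k : ℕ) : ℝ :=
  sSup {d : ℝ | ∃ (a : A) (ω σ' : Past A), (∀ j < k, ω j = σ' j) ∧ d = |P a ω - P a σ'|}

/-- Elementary conditional probability `μ(B | A)`, as a real number. -/
def condProbR {X : Type*} [MeasurableSpace X] (μ : Measure X) (B A : Set X) : ℝ :=
  ((μ[|A]) B).toReal

/-- The event that `η_i = ω` (suitably reindexed) for `−n ≤ i ≤ −1` and `η_i = b`
for `−(n+l) ≤ i ≤ −(n+1)`. -/
def pastEvt (n l : ℕ) (b : Bool) (ω : Past Bool) : Set (ZSeq Bool) :=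
  {η | (∀ i : ℤ, -(n : ℤ) ≤ i → i ≤ -1 → η i = ω (i.natAbs - 1)) ∧
       (∀ i : ℤ, -((n : ℤ) + l) ≤ i → i ≤ -((n : ℤ) + 1) → η i = b)}

/-- The event that `η_i = b` for `−(n+l) ≤ i ≤ −n`. -/
def blockEvt (n l : ℕ) (b : Bool) : Set (ZSeq Bool) :=
  {η | ∀ i : ℤ, -((n : ℤ) + l) ≤ i → i ≤ -(n : ℤ) → η i = b}

/-- The event that `η_i = b` for `−n ≤ i ≤ −1`. -/
def allBlock (n : ℕ) (b : Bool) : Set (ZSeq Bool) :=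
  {η | ∀ i : ℤ, -(n : ℤ) ≤ i → i ≤ -1 → η i = b}

/-- `P` is the g-function `P^{+,b}` obtained from `ν` by conditioning on the symbol `b`
in the far past: `P(a|ω) = lim_n lim_l ν(η₀ = a | η = b on [−(n+l),−(n+1)], η = ω on [−n,−1])`,
both iterated limits being required to exist. -/
def IsCondG (ν : Measure (ZSeq Bool)) (b : Bool) (P : Bool → Past Bool → ℝ) : Prop :=
  ∀ (a : Bool) (ω : Past Bool), ∃ L : ℕ → ℝ,
    (∀ n, Tendsto (fun l => condProbR ν {η | η 0 = a} (pastEvt n l b ω)) atTop (𝓝 (L n))) ∧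
    Tendsto L atTop (𝓝 (P a ω))

/-- `ν'` is the iterated weak limit `lim_n lim_l ν( · | η = b on [−(n+l),−n])`. -/
def IsCondLimitMeasure (ν : Measure (ZSeq Bool)) (b : Bool) (ν' : Measure (ZSeq Bool)) : Prop :=
  ∃ νseq : ℕ → Measure (ZSeq Bool),
    (∀ n, CylTendsto (fun l => ν[|blockEvt n l b]) (νseq n)) ∧ CylTendsto νseq ν'

/-- Stochastic domination: `ν ≤ μ` iff `ν B ≤ μ B` for every increasing measurable event `B`. -/
def StochDom {A : Type*} [MeasurableSpace A] [Preorder A]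
    (ν μ : Measure (ZSeq A)) : Prop :=
  ∀ B : Set (ZSeq A), MeasurableSet B → (∀ ⦃x y : ZSeq A⦄, x ≤ y → x ∈ B → y ∈ B) → ν B ≤ μ B

/-- `π` is the i.i.d. product measure with `π(η_i = +1) = ρ` for each coordinate. -/
def IsBernoulliProd (ρ : ℝ) (π : Measure (ZSeq Bool)) : Prop :=
  IsProbabilityMeasure π ∧ ∀ (s : Finset ℤ) (f : ℤ → Bool),
    π {η | ∀ i ∈ s, η i = f i} = ∏ i ∈ s, ENNReal.ofReal (if f i then ρ else 1 - ρ)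

/-- Splicing of pasts: coordinates `−k,…,−1` (indices `< k`) from `ω`, the rest from `σ`. -/
def splice {A : Type*} (σ ω : Past A) (k : ℕ) : Past A := fun j => if j < k then ω j else σ j

/-- `ν'` is an extreme point of the convex set of g-measures consistent with `P`. -/
def ExtremeGMeasure (ν' : Measure (ZSeq Bool)) (P : Bool → Past Bool → ℝ) : Prop :=
  IsGMeasure ν' P ∧
  ∀ ν₁ ν₂ : Measure (ZSeq Bool), IsGMeasure ν₁ P → IsGMeasure ν₂ P →
    ∀ t : ℝ, t ∈ Set.Ioo (0 : ℝ) 1 →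
      ν' = ENNReal.ofReal t • ν₁ + ENNReal.ofReal (1 - t) • ν₂ → ν₁ = ν' ∧ ν₂ = ν'

/-- The event that the spins on the line are `−1` on `{−m,…,−n} × {0}`. -/
def lineMinusEvt (n m : ℕ) : Set Cfg2 :=
  {η | ∀ i : ℤ, -(m : ℤ) ≤ i → i ≤ -(n : ℤ) → η (i, 0) = false}

/-- Nearest-neighbour adjacency in `ℤ²` (`‖x−y‖₁ = 1`). -/
def adj2 (x y : ℤ × ℤ) : Prop := (x.1 - y.1).natAbs + (x.2 - y.2).natAbs = 1

/-- The event `A_n`: there is an infinite nearest-neighbour path of `+1` spins starting at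
`(n,0)` entirely contained in the half-plane `{x ≤ n}`. -/
def plusPathEvt (n : ℕ) : Set Cfg2 :=
  {η | ∃ γ : ℕ → ℤ × ℤ, γ 0 = ((n : ℤ), 0) ∧ (∀ j, adj2 (γ j) (γ (j + 1))) ∧
    Function.Injective γ ∧ (∀ j, (γ j).1 ≤ (n : ℤ)) ∧ ∀ j, η (γ j) = true}

/-- The block map for the decimation `ν_{l,k}`: the `j`-th letter consists of the spins on
`[j(k+l), j(k+l)+l−1]`. -/
def blockMap (l k : ℕ) (η : ZSeq Bool) : ZSeq (Fin l → Bool) :=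
  fun j r => η (j * ((k : ℤ) + l) + r)

end
namespace SP
noncomputable section
open MeasureTheory Filter Topology ProbabilityTheory

/-! ### Cylinder sets -/

def cyl {ι A : Type*} (s : Finset ι) (f : ι → A) : Set (ι → A) := {η | ∀ i ∈ s, η i = f i}

lemma measurableSet_cyl {ι A : Type*} [MeasurableSpace A] [MeasurableSingletonClass A]
    (s : Finset ι) (f : ι → A) : MeasurableSet (cyl s f) := by
  have : cyl s f = ⋂ i ∈ (s : Set ι), (fun η : ι → A => η i) ⁻¹' {f i} := by
    ext η; simp [cyl]
  rw [this]
  exact MeasurableSet.biInter s.countable_toSet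
    (fun i _ => (measurable_pi_apply i) (measurableSet_singleton (f i)))

lemma cyl_congr {ι A : Type*} {s : Finset ι} {f g : ι → A} (h : ∀ i ∈ s, f i = g i) :
    cyl s f = cyl s g := by
  ext η; constructor <;> intro hη i hi <;> rw [hη i hi] <;> [exact h i hi; exact (h i hi).symm]

lemma cyl_empty {ι A : Type*} (f : ι → A) : cyl (∅ : Finset ι) f = Set.univ := by
  ext η; simp [cyl]

lemma cyl_insert {ι A : Type*} [DecidableEq ι] (j : ι) (s : Finset ι) (f : ι → A) :
    cyl (insert j s) f = {η : ι → A | η j = f j} ∩ cyl s f := by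
  ext η; simp [cyl, Finset.mem_insert, or_imp, forall_and, forall_eq]

lemma cyl_insert_update {ι A : Type*} [DecidableEq ι] {j : ι} {s : Finset ι} (hj : j ∉ s)
    (f : ι → A) (v : A) :
    cyl (insert j s) (Function.update f j v) = {η : ι → A | η j = v} ∩ cyl s f := by
  rw [cyl_insert, Function.update_self,
    cyl_congr (fun i hi => Function.update_of_ne (fun hij => hj (by rwa [hij] at hi)) v f)]

lemma cyl_split {ι : Type*} [DecidableEq ι] {j : ι} {s : Finset ι} (hj : j ∉ s) (f : ι → Bool) :
    cyl s f = cyl (insert j s) (Function.update f j true)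
      ∪ cyl (insert j s) (Function.update f j false) := by
  rw [cyl_insert_update hj, cyl_insert_update hj]
  ext η
  simp only [Set.mem_union, Set.mem_inter_iff, Set.mem_setOf_eq]
  rcases Bool.dichotomy (η j) with h | h <;> simp [h, cyl]

lemma cyl_disj {ι : Type*} [DecidableEq ι] {j : ι} {s : Finset ι} (f g : ι → Bool)
    (hfg : f j ≠ g j) (hjf : j ∈ s) :
    Disjoint (cyl s f) (cyl s g) := by
  rw [Set.disjoint_iff_inter_eq_empty]
  ext η
  simp only [Set.mem_inter_iff, Set.mem_empty_iff_false, iff_false, not_and, cyl,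
    Set.mem_setOf_eq]
  intro h1 h2
  exact hfg ((h1 j hjf) ▸ (h2 j hjf))

/-- Splitting a cylinder probability at one more site (finite measure). -/
lemma rho_add {ι : Type*} [DecidableEq ι] (μ : Measure ((ι → Bool)))
    [IsFiniteMeasure μ] {j : ι} {s : Finset ι} (hj : j ∉ s) (f : ι → Bool) :
    (μ (cyl s f)).toReal
      = (μ (cyl (insert j s) (Function.update f j true))).toReal
        + (μ (cyl (insert j s) (Function.update f j false))).toReal := by
  rw [cyl_split hj f, measure_union ?hd (measurableSet_cyl _ _),
    ENNReal.toReal_add (measure_ne_top _ _) (measure_ne_top _ _)]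
  case hd =>
    exact cyl_disj _ _ (by simp) (Finset.mem_insert_self j s)

lemma rho_mono {ι A : Type*} [MeasurableSpace A] [MeasurableSingletonClass A]
    (μ : Measure (ι → A)) [IsFiniteMeasure μ] {s t : Finset ι} {f g : ι → A}
    (hst : s ⊆ t) (hfg : ∀ i ∈ s, g i = f i) :
    (μ (cyl t g)).toReal ≤ (μ (cyl s f)).toReal := by
  refine ENNReal.toReal_mono (measure_ne_top _ _) (measure_mono ?_)
  intro η hη i hi
  rw [hη i (hst hi), hfg i hi]

end
end SP
namespace SP
noncomputable section
open MeasureTheory Filter Topology ProbabilityTheory Classical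

/-! ### sval and nbrs basics -/

lemma sval_abs_le (b : Bool) : |sval b| ≤ 1 := by cases b <;> simp [sval]

lemma sval_sub_abs_le (a b : Bool) : |sval a - sval b| ≤ 2 := by
  cases a <;> cases b <;> norm_num [sval]

lemma sval_inf_add_sup (a b : Bool) : sval (a ⊓ b) + sval (a ⊔ b) = sval a + sval b := by
  cases a <;> cases b <;> norm_num [sval]

lemma sval_supermod (a b c d : Bool) :
    sval a * sval c + sval b * sval d ≤ sval (a ⊓ b) * sval (c ⊓ d) + sval (a ⊔ b) * sval (c ⊔ d) := by
  cases a <;> cases b <;> cases c <;> cases d <;> norm_num [sval]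

lemma card_nbrs_le (x : ℤ × ℤ) : (nbrs x).card ≤ 4 := by
  unfold nbrs
  refine le_trans (Finset.card_insert_le _ _) (Nat.succ_le_succ ?_)
  refine le_trans (Finset.card_insert_le _ _) (Nat.succ_le_succ ?_)
  refine le_trans (Finset.card_insert_le _ _) (Nat.succ_le_succ ?_)
  exact (Finset.card_singleton _).le

lemma mem_nbrs_comm {x y : ℤ × ℤ} : y ∈ nbrs x ↔ x ∈ nbrs y := by
  simp only [nbrs, Finset.mem_insert, Finset.mem_singleton, Prod.ext_iff]
  omega

/-! ### The three pieces of the energy -/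

def enA (Λ : Finset (ℤ × ℤ)) (ω : Cfg2) : ℝ :=
  ∑ x ∈ Λ, ∑ y ∈ Λ.filter (fun y => y ∈ nbrs x), sval (ω x) * sval (ω y)

def enB (Λ : Finset (ℤ × ℤ)) (σ ω : Cfg2) : ℝ :=
  ∑ x ∈ Λ, ∑ y ∈ (nbrs x).filter (fun y => y ∉ Λ), sval (ω x) * sval (σ y)

def enC (Λ : Finset (ℤ × ℤ)) (ω : Cfg2) : ℝ := ∑ x ∈ Λ, sval (ω x)

def energy (β h : ℝ) (Λ : Finset (ℤ × ℤ)) (σ ω : Cfg2) : ℝ :=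
  β * (enA Λ ω / 2 + enB Λ σ ω) - h * enC Λ ω

lemma isingWeight_eq (β h : ℝ) (Λ : Finset (ℤ × ℤ)) (σ ω : Cfg2) :
    isingWeight β h Λ σ ω = Real.exp (energy β h Λ σ ω) := rfl

lemma isingWeight_pos (β h : ℝ) (Λ : Finset (ℤ × ℤ)) (σ ω : Cfg2) :
    0 < isingWeight β h Λ σ ω := Real.exp_pos _

/-! ### Energy change under a single spin flip -/

lemma enC_diff {Λ : Finset (ℤ × ℤ)} {x₀ : ℤ × ℤ} {ω ω' : Cfg2}
    (hoff : ∀ y, y ≠ x₀ → ω' y = ω y) : |enC Λ ω' - enC Λ ω| ≤ 2 := by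
  unfold enC
  rw [← Finset.sum_sub_distrib]
  calc |∑ x ∈ Λ, (sval (ω' x) - sval (ω x))| ≤ ∑ x ∈ Λ, |sval (ω' x) - sval (ω x)| :=
        Finset.abs_sum_le_sum_abs _ _
    _ ≤ ∑ x ∈ Λ, (if x = x₀ then 2 else 0) := by
        refine Finset.sum_le_sum fun x _ => ?_
        by_cases hx : x = x₀
        · simpa [hx] using sval_sub_abs_le (ω' x₀) (ω x₀)
        · simp [hx, hoff x hx]
    _ ≤ 2 := by
        rw [Finset.sum_ite_eq' Λ x₀ (fun _ => (2:ℝ))]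
        split <;> norm_num

lemma enB_diff {Λ : Finset (ℤ × ℤ)} {x₀ : ℤ × ℤ} {σ ω ω' : Cfg2}
    (hoff : ∀ y, y ≠ x₀ → ω' y = ω y) : |enB Λ σ ω' - enB Λ σ ω| ≤ 8 := by
  unfold enB
  rw [← Finset.sum_sub_distrib]
  calc |∑ x ∈ Λ, (∑ y ∈ (nbrs x).filter (fun y => y ∉ Λ), sval (ω' x) * sval (σ y)
          - ∑ y ∈ (nbrs x).filter (fun y => y ∉ Λ), sval (ω x) * sval (σ y))|
      ≤ ∑ x ∈ Λ, |∑ y ∈ (nbrs x).filter (fun y => y ∉ Λ), sval (ω' x) * sval (σ y)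
          - ∑ y ∈ (nbrs x).filter (fun y => y ∉ Λ), sval (ω x) * sval (σ y)| :=
        Finset.abs_sum_le_sum_abs _ _
    _ ≤ ∑ x ∈ Λ, (if x = x₀ then 8 else 0) := by
        refine Finset.sum_le_sum fun x _ => ?_
        by_cases hx : x = x₀
        · simp only [hx, if_pos]
          rw [← Finset.sum_sub_distrib]
          calc |∑ y ∈ (nbrs x₀).filter (fun y => y ∉ Λ),
                  (sval (ω' x₀) * sval (σ y) - sval (ω x₀) * sval (σ y))|
              ≤ ∑ y ∈ (nbrs x₀).filter (fun y => y ∉ Λ), 2 := by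
                refine le_trans (Finset.abs_sum_le_sum_abs _ _) (Finset.sum_le_sum fun y _ => ?_)
                rw [← sub_mul, abs_mul]
                calc |sval (ω' x₀) - sval (ω x₀)| * |sval (σ y)| ≤ 2 * 1 :=
                    mul_le_mul (sval_sub_abs_le _ _) (sval_abs_le _) (abs_nonneg _) (by norm_num)
                  _ = 2 := by norm_num
            _ = 2 * ((nbrs x₀).filter (fun y => y ∉ Λ)).card := by
                rw [Finset.sum_const]; push_cast; ring
            _ ≤ 2 * 4 := by
                have hc : (((nbrs x₀).filter (fun y => y ∉ Λ)).card : ℝ) ≤ 4 := by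
                  exact_mod_cast le_trans (Finset.card_le_card (Finset.filter_subset _ _))
                    (card_nbrs_le _)
                nlinarith
            _ = 8 := by norm_num
        · simp [hx, hoff x hx]
    _ ≤ 8 := by
        rw [Finset.sum_ite_eq' Λ x₀ (fun _ => (8:ℝ))]
        split <;> norm_num

lemma enA_diff {Λ : Finset (ℤ × ℤ)} {x₀ : ℤ × ℤ} {ω ω' : Cfg2}
    (hoff : ∀ y, y ≠ x₀ → ω' y = ω y) : |enA Λ ω' - enA Λ ω| ≤ 16 := by
  unfold enA
  rw [← Finset.sum_sub_distrib]
  have hterm : ∀ x ∈ Λ,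
      |∑ y ∈ Λ.filter (fun y => y ∈ nbrs x), sval (ω' x) * sval (ω' y)
        - ∑ y ∈ Λ.filter (fun y => y ∈ nbrs x), sval (ω x) * sval (ω y)|
      ≤ (if x = x₀ then 8 else 0) + (if x ∈ nbrs x₀ then 2 else 0) := by
    intro x _
    rw [← Finset.sum_sub_distrib]
    refine le_trans (Finset.abs_sum_le_sum_abs _ _) ?_
    have hptw : ∀ y ∈ Λ.filter (fun y => y ∈ nbrs x),
        |sval (ω' x) * sval (ω' y) - sval (ω x) * sval (ω y)|
          ≤ if x = x₀ then 2 else (if y = x₀ then 2 else 0) := by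
      intro y _
      by_cases hx : x = x₀
      · simp only [hx, if_pos]
        have h1 : |sval (ω' x₀) * sval (ω' y)| ≤ 1 := by
          rw [abs_mul]
          exact mul_le_one₀ (sval_abs_le _) (abs_nonneg _) (sval_abs_le _)
        have h2 : |sval (ω x₀) * sval (ω y)| ≤ 1 := by
          rw [abs_mul]
          exact mul_le_one₀ (sval_abs_le _) (abs_nonneg _) (sval_abs_le _)
        calc |sval (ω' x₀) * sval (ω' y) - sval (ω x₀) * sval (ω y)|
            ≤ |sval (ω' x₀) * sval (ω' y)| + |sval (ω x₀) * sval (ω y)| := abs_sub _ _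
          _ ≤ 2 := by linarith
      · by_cases hy : y = x₀
        · simp only [hx, if_neg, hy, if_pos, hoff x hx]
          have h1 : |sval (ω x) * sval (ω' x₀)| ≤ 1 := by
            rw [abs_mul]
            exact mul_le_one₀ (sval_abs_le _) (abs_nonneg _) (sval_abs_le _)
          have h2 : |sval (ω x) * sval (ω x₀)| ≤ 1 := by
            rw [abs_mul]
            exact mul_le_one₀ (sval_abs_le _) (abs_nonneg _) (sval_abs_le _)
          calc |sval (ω x) * sval (ω' x₀) - sval (ω x) * sval (ω x₀)|
              ≤ |sval (ω x) * sval (ω' x₀)| + |sval (ω x) * sval (ω x₀)| := abs_sub _ _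
            _ ≤ 2 := by linarith
        · simp [hx, hy, hoff x hx, hoff y hy]
    refine le_trans (Finset.sum_le_sum hptw) ?_
    by_cases hx : x = x₀
    · subst hx
      rw [Finset.sum_congr rfl (fun y _ => if_pos rfl), Finset.sum_const, nsmul_eq_mul,
        if_pos rfl]
      have hc : ((Λ.filter (fun y => y ∈ nbrs x)).card : ℝ) ≤ 4 := by
        exact_mod_cast le_trans
          (Finset.card_le_card (fun y hy => (Finset.mem_filter.mp hy).2)) (card_nbrs_le x)
      have h0 : (0:ℝ) ≤ (if x ∈ nbrs x then (2:ℝ) else 0) := by positivity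
      linarith
    · rw [Finset.sum_congr rfl (fun y _ => if_neg hx), if_neg hx,
        Finset.sum_ite_eq' _ x₀ (fun _ => (2:ℝ))]
      by_cases hmem : x₀ ∈ Λ.filter (fun y => y ∈ nbrs x)
      · have hxn : x ∈ nbrs x₀ := mem_nbrs_comm.mp (Finset.mem_filter.mp hmem).2
        simp [hmem, hxn]
      · simp only [hmem, if_neg, not_false_iff]
        have : (0:ℝ) ≤ (if x ∈ nbrs x₀ then (2:ℝ) else 0) := by positivity
        linarith
  calc |∑ x ∈ Λ, (∑ y ∈ Λ.filter (fun y => y ∈ nbrs x), sval (ω' x) * sval (ω' y)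
          - ∑ y ∈ Λ.filter (fun y => y ∈ nbrs x), sval (ω x) * sval (ω y))|
      ≤ ∑ x ∈ Λ, ((if x = x₀ then (8:ℝ) else 0) + (if x ∈ nbrs x₀ then 2 else 0)) :=
        le_trans (Finset.abs_sum_le_sum_abs _ _) (Finset.sum_le_sum hterm)
    _ ≤ 16 := by
        rw [Finset.sum_add_distrib, Finset.sum_ite_eq' Λ x₀ (fun _ => (8:ℝ))]
        have h2 : ∑ x ∈ Λ, (if x ∈ nbrs x₀ then (2:ℝ) else 0) ≤ 8 := by
          rw [Finset.sum_ite_mem, Finset.sum_const, nsmul_eq_mul]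
          have hc : ((Λ ∩ nbrs x₀).card : ℝ) ≤ 4 :=  by
            exact_mod_cast le_trans (Finset.card_le_card Finset.inter_subset_right)
              (card_nbrs_le x₀)
          linarith
        split <;> linarith

/-- Bound on the energy change under a single spin change. -/
lemma energy_diff_le (β h : ℝ) (hβ : 0 ≤ β) (Λ : Finset (ℤ × ℤ)) (σ : Cfg2) {x₀ : ℤ × ℤ}
    {ω ω' : Cfg2} (hoff : ∀ y, y ≠ x₀ → ω' y = ω y) :
    |energy β h Λ σ ω' - energy β h Λ σ ω| ≤ 16 * β + 2 * |h| := by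
  unfold energy
  have hA := enA_diff (Λ := Λ) hoff
  have hB := enB_diff (Λ := Λ) (σ := σ) hoff
  have hC := enC_diff (Λ := Λ) hoff
  have : β * (enA Λ ω' / 2 + enB Λ σ ω') - h * enC Λ ω'
      - (β * (enA Λ ω / 2 + enB Λ σ ω) - h * enC Λ ω)
      = β * ((enA Λ ω' - enA Λ ω) / 2 + (enB Λ σ ω' - enB Λ σ ω))
        - h * (enC Λ ω' - enC Λ ω) := by ring
  rw [this]
  have habs : ∀ u v : ℝ, |u - v| ≤ |u| + |v| := fun u v => abs_sub u v
  calc |β * ((enA Λ ω' - enA Λ ω) / 2 + (enB Λ σ ω' - enB Λ σ ω)) - h * (enC Λ ω' - enC Λ ω)|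
      ≤ |β * ((enA Λ ω' - enA Λ ω) / 2 + (enB Λ σ ω' - enB Λ σ ω))| + |h * (enC Λ ω' - enC Λ ω)| :=
        abs_sub _ _
    _ ≤ 16 * β + 2 * |h| := by
        rw [abs_mul, abs_mul, abs_of_nonneg hβ]
        have h1 : |(enA Λ ω' - enA Λ ω) / 2 + (enB Λ σ ω' - enB Λ σ ω)| ≤ 16 := by
          refine le_trans (abs_add_le _ _) ?_
          rw [abs_div]
          have : |(2:ℝ)| = 2 := by norm_num
          rw [this]
          linarith
        nlinarith [abs_nonneg h, abs_nonneg (enC Λ ω' - enC Λ ω)]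

end
end SP
namespace SP
noncomputable section
open MeasureTheory Filter Topology ProbabilityTheory
open scoped Classical

/-! ### Supermodularity of the energy -/

lemma energy_supermod (β h : ℝ) (hβ : 0 ≤ β) (Λ : Finset (ℤ × ℤ)) (σ : Cfg2) (ω₁ ω₂ : Cfg2) :
    energy β h Λ σ ω₁ + energy β h Λ σ ω₂
      ≤ energy β h Λ σ (ω₁ ⊓ ω₂) + energy β h Λ σ (ω₁ ⊔ ω₂) := by
  have hC : enC Λ (ω₁ ⊓ ω₂) + enC Λ (ω₁ ⊔ ω₂) = enC Λ ω₁ + enC Λ ω₂ := by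
    unfold enC
    rw [← Finset.sum_add_distrib, ← Finset.sum_add_distrib]
    exact Finset.sum_congr rfl fun x _ => sval_inf_add_sup _ _
  have hB : enB Λ σ (ω₁ ⊓ ω₂) + enB Λ σ (ω₁ ⊔ ω₂) = enB Λ σ ω₁ + enB Λ σ ω₂ := by
    unfold enB
    rw [← Finset.sum_add_distrib, ← Finset.sum_add_distrib]
    refine Finset.sum_congr rfl fun x _ => ?_
    rw [← Finset.sum_add_distrib, ← Finset.sum_add_distrib]
    refine Finset.sum_congr rfl fun y _ => ?_
    simp only [Pi.inf_apply, Pi.sup_apply]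
    linear_combination sval_inf_add_sup (ω₁ x) (ω₂ x) * sval (σ y)
  have hA : enA Λ ω₁ + enA Λ ω₂ ≤ enA Λ (ω₁ ⊓ ω₂) + enA Λ (ω₁ ⊔ ω₂) := by
    unfold enA
    rw [← Finset.sum_add_distrib, ← Finset.sum_add_distrib]
    refine Finset.sum_le_sum fun x _ => ?_
    rw [← Finset.sum_add_distrib, ← Finset.sum_add_distrib]
    refine Finset.sum_le_sum fun y _ => ?_
    simpa only [Pi.inf_apply, Pi.sup_apply] using sval_supermod (ω₁ x) (ω₂ x) (ω₁ y) (ω₂ y)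
  have hA2 : β * enA Λ ω₁ + β * enA Λ ω₂
      ≤ β * enA Λ (ω₁ ⊓ ω₂) + β * enA Λ (ω₁ ⊔ ω₂) := by
    calc β * enA Λ ω₁ + β * enA Λ ω₂ = β * (enA Λ ω₁ + enA Λ ω₂) := by ring
      _ ≤ β * (enA Λ (ω₁ ⊓ ω₂) + enA Λ (ω₁ ⊔ ω₂)) := mul_le_mul_of_nonneg_left hA hβ
      _ = β * enA Λ (ω₁ ⊓ ω₂) + β * enA Λ (ω₁ ⊔ ω₂) := by ring
  have hB2 : β * enB Λ σ (ω₁ ⊓ ω₂) + β * enB Λ σ (ω₁ ⊔ ω₂)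
      = β * enB Λ σ ω₁ + β * enB Λ σ ω₂ := by linear_combination β * hB
  have hC2 : h * enC Λ (ω₁ ⊓ ω₂) + h * enC Λ (ω₁ ⊔ ω₂)
      = h * enC Λ ω₁ + h * enC Λ ω₂ := by linear_combination h * hC
  unfold energy
  linarith [hA2, hB2, hC2]

lemma isingWeight_logsup (β h : ℝ) (hβ : 0 ≤ β) (Λ : Finset (ℤ × ℤ)) (σ : Cfg2) (ω₁ ω₂ : Cfg2) :
    isingWeight β h Λ σ ω₁ * isingWeight β h Λ σ ω₂
      ≤ isingWeight β h Λ σ (ω₁ ⊓ ω₂) * isingWeight β h Λ σ (ω₁ ⊔ ω₂) := by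
  rw [isingWeight_eq, isingWeight_eq, isingWeight_eq, isingWeight_eq, ← Real.exp_add,
    ← Real.exp_add]
  exact Real.exp_le_exp.mpr (energy_supermod β h hβ Λ σ ω₁ ω₂)

/-! ### fill -/

lemma fill_mem (Λ : Finset (ℤ × ℤ)) (σ : Cfg2) (τ : ↥Λ → Bool) {x : ℤ × ℤ} (hx : x ∈ Λ) :
    fill Λ σ τ x = τ ⟨x, hx⟩ := dif_pos hx

lemma fill_not_mem (Λ : Finset (ℤ × ℤ)) (σ : Cfg2) (τ : ↥Λ → Bool) {x : ℤ × ℤ} (hx : x ∉ Λ) :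
    fill Λ σ τ x = σ x := dif_neg hx

lemma fill_update (Λ : Finset (ℤ × ℤ)) (σ : Cfg2) (τ : ↥Λ → Bool) {x₀ : ℤ × ℤ} (hx₀ : x₀ ∈ Λ)
    (v : Bool) :
    fill Λ σ (Function.update τ ⟨x₀, hx₀⟩ v) = Function.update (fill Λ σ τ) x₀ v := by
  funext y
  by_cases hy : y ∈ Λ
  · rw [fill_mem Λ σ _ hy]
    by_cases hyx : y = x₀
    · subst hyx
      have he : (⟨y, hy⟩ : ↥Λ) = ⟨y, hx₀⟩ := rfl
      rw [he, Function.update_self, Function.update_self]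
    · rw [Function.update_of_ne hyx, Function.update_of_ne (fun hc => hyx (Subtype.ext_iff.mp hc)),
        fill_mem Λ σ τ hy]
  · have hyx : y ≠ x₀ := fun hc => hy (hc ▸ hx₀)
    rw [Function.update_of_ne hyx, fill_not_mem Λ σ _ hy, fill_not_mem Λ σ τ hy]

lemma fill_inf (Λ : Finset (ℤ × ℤ)) (σ : Cfg2) (τ₁ τ₂ : ↥Λ → Bool) :
    fill Λ σ (τ₁ ⊓ τ₂) = fill Λ σ τ₁ ⊓ fill Λ σ τ₂ := by
  funext y
  by_cases hy : y ∈ Λ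
  · simp only [Pi.inf_apply, fill_mem Λ σ _ hy]
  · simp only [Pi.inf_apply, fill_not_mem Λ σ _ hy, inf_idem]

lemma fill_sup (Λ : Finset (ℤ × ℤ)) (σ : Cfg2) (τ₁ τ₂ : ↥Λ → Bool) :
    fill Λ σ (τ₁ ⊔ τ₂) = fill Λ σ τ₁ ⊔ fill Λ σ τ₂ := by
  funext y
  by_cases hy : y ∈ Λ
  · simp only [Pi.sup_apply, fill_mem Λ σ _ hy]
  · simp only [Pi.sup_apply, fill_not_mem Λ σ _ hy, sup_idem]

lemma fill_mono (Λ : Finset (ℤ × ℤ)) (σ : Cfg2) : Monotone (fill Λ σ) := by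
  intro τ₁ τ₂ hτ y
  by_cases hy : y ∈ Λ
  · rw [fill_mem Λ σ _ hy, fill_mem Λ σ _ hy]; exact hτ _
  · rw [fill_not_mem Λ σ _ hy, fill_not_mem Λ σ _ hy]

/-! ### Partition function and constrained sums -/

def Zfun (β h : ℝ) (Λ : Finset (ℤ × ℤ)) (σ : Cfg2) : ℝ :=
  ∑ τ : ↥Λ → Bool, isingWeight β h Λ σ (fill Λ σ τ)

/-- Sum of weights of configurations whose fill lies in `E`. -/
def SE (β h : ℝ) (Λ : Finset (ℤ × ℤ)) (σ : Cfg2) (E : Set Cfg2) : ℝ :=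
  ∑ τ : ↥Λ → Bool, if fill Λ σ τ ∈ E then isingWeight β h Λ σ (fill Λ σ τ) else 0

lemma Zfun_pos (β h : ℝ) (Λ : Finset (ℤ × ℤ)) (σ : Cfg2) : 0 < Zfun β h Λ σ :=
  Finset.sum_pos (fun τ _ => isingWeight_pos β h Λ σ _) Finset.univ_nonempty

lemma SE_nonneg (β h : ℝ) (Λ : Finset (ℤ × ℤ)) (σ : Cfg2) (E : Set Cfg2) :
    0 ≤ SE β h Λ σ E := by
  unfold SE
  refine Finset.sum_nonneg fun τ _ => ?_
  split
  · exact (isingWeight_pos β h Λ σ _).le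
  · exact le_rfl

lemma SE_le_Zfun (β h : ℝ) (Λ : Finset (ℤ × ℤ)) (σ : Cfg2) (E : Set Cfg2) :
    SE β h Λ σ E ≤ Zfun β h Λ σ := by
  unfold SE Zfun
  refine Finset.sum_le_sum fun τ _ => ?_
  split
  · exact le_rfl
  · exact (isingWeight_pos β h Λ σ _).le

lemma SE_univ (β h : ℝ) (Λ : Finset (ℤ × ℤ)) (σ : Cfg2) :
    SE β h Λ σ Set.univ = Zfun β h Λ σ := by
  unfold SE Zfun
  exact Finset.sum_congr rfl fun τ _ => if_pos (Set.mem_univ _)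

lemma SE_congr (β h : ℝ) (Λ : Finset (ℤ × ℤ)) (σ : Cfg2) {E F : Set Cfg2}
    (hEF : ∀ τ : ↥Λ → Bool, fill Λ σ τ ∈ E ↔ fill Λ σ τ ∈ F) :
    SE β h Λ σ E = SE β h Λ σ F := by
  unfold SE
  exact Finset.sum_congr rfl fun τ _ => if_congr (hEF τ) rfl rfl

/-- `isingFV` of a measurable set. -/
lemma isingFV_apply (β h : ℝ) (Λ : Finset (ℤ × ℤ)) (σ : Cfg2) {E : Set Cfg2}
    (hE : MeasurableSet E) :
    isingFV β h Λ σ E = ENNReal.ofReal (SE β h Λ σ E / Zfun β h Λ σ) := by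
  unfold isingFV
  rw [Measure.smul_apply, Measure.coe_finset_sum, Finset.sum_apply]
  have hpt : ∀ τ : ↥Λ → Bool,
      (ENNReal.ofReal (isingWeight β h Λ σ (fill Λ σ τ)) • Measure.dirac (fill Λ σ τ)) E
        = ENNReal.ofReal (if fill Λ σ τ ∈ E then isingWeight β h Λ σ (fill Λ σ τ) else 0) := by
    intro τ
    rw [Measure.smul_apply, Measure.dirac_apply' _ hE]
    by_cases hτ : fill Λ σ τ ∈ E
    · simp [hτ, Set.indicator_of_mem hτ]
    · simp [hτ, Set.indicator_of_notMem hτ]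
  rw [Finset.sum_congr rfl fun τ _ => hpt τ]
  have hZ : (∑ τ : ↥Λ → Bool, ENNReal.ofReal (isingWeight β h Λ σ (fill Λ σ τ)))
      = ENNReal.ofReal (Zfun β h Λ σ) :=
    (ENNReal.ofReal_sum_of_nonneg (fun τ _ => (isingWeight_pos β h Λ σ _).le)).symm
  have hS : (∑ τ : ↥Λ → Bool,
        ENNReal.ofReal (if fill Λ σ τ ∈ E then isingWeight β h Λ σ (fill Λ σ τ) else 0))
      = ENNReal.ofReal (SE β h Λ σ E) :=
    (ENNReal.ofReal_sum_of_nonneg (fun τ _ => by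
      split
      · exact (isingWeight_pos β h Λ σ _).le
      · exact le_rfl)).symm
  rw [hS, hZ, smul_eq_mul, ENNReal.ofReal_div_of_pos (Zfun_pos β h Λ σ), ENNReal.div_eq_inv_mul]

end
end SP
namespace SP
noncomputable section
open MeasureTheory Filter Topology ProbabilityTheory
open scoped Classical

variable {β h : ℝ} {Λ : Finset (ℤ × ℤ)} {σ : Cfg2}

lemma SE_union_disjoint {E₁ E₂ : Set Cfg2} (hd : Disjoint E₁ E₂) :
    SE β h Λ σ (E₁ ∪ E₂) = SE β h Λ σ E₁ + SE β h Λ σ E₂ := by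
  unfold SE
  rw [← Finset.sum_add_distrib]
  refine Finset.sum_congr rfl fun τ _ => ?_
  by_cases h1 : fill Λ σ τ ∈ E₁
  · have h2 : fill Λ σ τ ∉ E₂ := fun h2 => Set.disjoint_left.mp hd h1 h2
    simp [h1, h2]
  · by_cases h2 : fill Λ σ τ ∈ E₂ <;> simp [h1, h2]

lemma SE_split {j : ℤ × ℤ} {S : Finset (ℤ × ℤ)} (hj : j ∉ S) (F : Cfg2) :
    SE β h Λ σ (cyl S F)
      = SE β h Λ σ (cyl (insert j S) (Function.update F j true))
        + SE β h Λ σ (cyl (insert j S) (Function.update F j false)) := by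
  rw [← SE_union_disjoint ?hd, ← cyl_split hj F]
  case hd =>
    rw [cyl_insert_update hj, cyl_insert_update hj]
    refine Set.disjoint_left.mpr fun η h1 h2 => ?_
    have e1 : η j = true := h1.1
    have e2 : η j = false := h2.1
    rw [e1] at e2
    exact Bool.noConfusion e2

lemma SE_split' {j : ℤ × ℤ} {S : Finset (ℤ × ℤ)} (hj : j ∉ S) (F : Cfg2) (v : Bool) :
    SE β h Λ σ (cyl S F)
      = SE β h Λ σ (cyl (insert j S) (Function.update F j v))
        + SE β h Λ σ (cyl (insert j S) (Function.update F j (!v))) := by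
  cases v
  · rw [SE_split hj F]; simp [add_comm]
  · rw [SE_split hj F]; simp

/-- Flipping the imposed value at one site costs at most a factor `exp(16β+2|h|)`. -/
lemma SE_flip (hβ : 0 ≤ β) {x₀ : ℤ × ℤ} (hx₀Λ : x₀ ∈ Λ) {S : Finset (ℤ × ℤ)} (hx₀S : x₀ ∉ S)
    (F : Cfg2) (v : Bool) :
    SE β h Λ σ (cyl (insert x₀ S) (Function.update F x₀ (!v)))
      ≤ Real.exp (16 * β + 2 * |h|)
        * SE β h Λ σ (cyl (insert x₀ S) (Function.update F x₀ v)) := by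
  set K := 16 * β + 2 * |h| with hK
  set E₁ := cyl (insert x₀ S) (Function.update F x₀ (!v)) with hE₁
  set E₂ := cyl (insert x₀ S) (Function.update F x₀ v) with hE₂
  set w := fun τ : ↥Λ → Bool => isingWeight β h Λ σ (fill Λ σ τ) with hw
  have hSE : ∀ E : Set Cfg2, SE β h Λ σ E
      = ∑ τ ∈ Finset.univ.filter (fun τ : ↥Λ → Bool => fill Λ σ τ ∈ E), w τ := by
    intro E
    rw [Finset.sum_filter]
    rfl
  set ι : (↥Λ → Bool) → (↥Λ → Bool) := fun τ => Function.update τ ⟨x₀, hx₀Λ⟩ v with hι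
  have hfillι : ∀ τ, fill Λ σ (ι τ) = Function.update (fill Λ σ τ) x₀ v :=
    fun τ => fill_update Λ σ τ hx₀Λ v
  have hwle : ∀ τ, w τ ≤ Real.exp K * w (ι τ) := by
    intro τ
    have hoff : ∀ y, y ≠ x₀ → fill Λ σ (ι τ) y = fill Λ σ τ y := by
      intro y hy
      rw [hfillι τ, Function.update_of_ne hy]
    have hdiff := energy_diff_le β h hβ Λ σ (x₀ := x₀) (ω := fill Λ σ τ)
      (ω' := fill Λ σ (ι τ)) hoff
    have : energy β h Λ σ (fill Λ σ τ) ≤ energy β h Λ σ (fill Λ σ (ι τ)) + K := by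
      have := abs_le.mp hdiff
      linarith [this.1]
    calc w τ = Real.exp (energy β h Λ σ (fill Λ σ τ)) := rfl
      _ ≤ Real.exp (energy β h Λ σ (fill Λ σ (ι τ)) + K) := Real.exp_le_exp.mpr this
      _ = Real.exp K * w (ι τ) := by rw [Real.exp_add]; exact mul_comm _ _
  rw [hSE E₁, hSE E₂]
  set A := Finset.univ.filter (fun τ : ↥Λ → Bool => fill Λ σ τ ∈ E₁) with hA
  set B := Finset.univ.filter (fun τ : ↥Λ → Bool => fill Λ σ τ ∈ E₂) with hB
  have hval : ∀ τ ∈ A, fill Λ σ τ x₀ = !v := by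
    intro τ hτ
    have := (Finset.mem_filter.mp hτ).2
    have := this x₀ (Finset.mem_insert_self x₀ S)
    rwa [Function.update_self] at this
  have himg : ∀ τ ∈ A, ι τ ∈ B := by
    intro τ hτ
    have hτ2 := (Finset.mem_filter.mp hτ).2
    refine Finset.mem_filter.mpr ⟨Finset.mem_univ _, ?_⟩
    intro i hi
    rcases Finset.mem_insert.mp hi with rfl | hiS
    · rw [hfillι τ, Function.update_self, Function.update_self]
    · have hix : i ≠ x₀ := fun hc => hx₀S (hc ▸ hiS)
      rw [hfillι τ, Function.update_of_ne hix, Function.update_of_ne hix]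
      have := hτ2 i (Finset.mem_insert_of_mem hiS)
      rwa [Function.update_of_ne hix] at this
  have hinj : Set.InjOn ι A := by
    intro τ₁ h1 τ₂ h2 he
    funext x
    by_cases hx : x = (⟨x₀, hx₀Λ⟩ : ↥Λ)
    · subst hx
      have e1 : τ₁ ⟨x₀, hx₀Λ⟩ = !v := by
        have := hval τ₁ h1
        rwa [fill_mem Λ σ τ₁ hx₀Λ] at this
      have e2 : τ₂ ⟨x₀, hx₀Λ⟩ = !v := by
        have := hval τ₂ h2
        rwa [fill_mem Λ σ τ₂ hx₀Λ] at this
      rw [e1, e2]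
    · have hthis := congrFun he x
      simp only [hι] at hthis
      rwa [Function.update_of_ne hx, Function.update_of_ne hx] at hthis
  calc ∑ τ ∈ A, w τ ≤ ∑ τ ∈ A, Real.exp K * w (ι τ) :=
        Finset.sum_le_sum fun τ _ => hwle τ
    _ = Real.exp K * ∑ τ ∈ A, w (ι τ) := by rw [Finset.mul_sum]
    _ = Real.exp K * ∑ τ' ∈ A.image ι, w τ' := by
        rw [Finset.sum_image (fun τ₁ h1 τ₂ h2 => hinj h1 h2)]
    _ ≤ Real.exp K * ∑ τ' ∈ B, w τ' := by
        refine mul_le_mul_of_nonneg_left ?_ (Real.exp_pos K).le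
        refine Finset.sum_le_sum_of_subset_of_nonneg ?_ (fun τ _ _ => (isingWeight_pos _ _ _ _ _).le)
        intro τ' hτ'
        obtain ⟨τ, hτA, rfl⟩ := Finset.mem_image.mp hτ'
        exact himg τ hτA

/-- Finite-volume positivity (finite energy). -/
lemma SE_pos (hβ : 0 ≤ β) (S : Finset (ℤ × ℤ)) (hSΛ : ∀ x ∈ S, x ∈ Λ) (F : Cfg2) :
    ((1 + Real.exp (16 * β + 2 * |h|))⁻¹) ^ S.card * Zfun β h Λ σ ≤ SE β h Λ σ (cyl S F) := by
  induction S using Finset.induction_on generalizing F with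
  | empty =>
      rw [show cyl (∅ : Finset (ℤ × ℤ)) F = Set.univ from cyl_empty F, SE_univ]
      simp
  | @insert a S haS IH =>
      have haΛ : a ∈ Λ := hSΛ a (Finset.mem_insert_self a S)
      have hSΛ' : ∀ x ∈ S, x ∈ Λ := fun x hx => hSΛ x (Finset.mem_insert_of_mem hx)
      have hIH := IH hSΛ' F
      set K := 16 * β + 2 * |h| with hK
      have hexp : (0:ℝ) < 1 + Real.exp K := by positivity
      have hsplit := SE_split' (β := β) (h := h) (Λ := Λ) (σ := σ) haS F (F a)
      have hflip := SE_flip (β := β) (h := h) (σ := σ) hβ haΛ haS F (F a)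
      have hupd : Function.update F a (F a) = F := Function.update_eq_self a F
      rw [hupd] at hsplit hflip
      -- `SE (cyl S F) ≤ (1 + exp K) * SE (cyl (insert a S) F)`
      have hmain : SE β h Λ σ (cyl S F) ≤ (1 + Real.exp K) * SE β h Λ σ (cyl (insert a S) F) := by
        rw [hsplit]
        nlinarith [SE_nonneg β h Λ σ (cyl (insert a S) F)]
      have : (1 + Real.exp K)⁻¹ * SE β h Λ σ (cyl S F) ≤ SE β h Λ σ (cyl (insert a S) F) := by
        rw [inv_mul_le_iff₀ hexp]
        linarith [hmain]
      calc (1 + Real.exp K)⁻¹ ^ (insert a S).card * Zfun β h Λ σ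
          = (1 + Real.exp K)⁻¹ * ((1 + Real.exp K)⁻¹ ^ S.card * Zfun β h Λ σ) := by
            rw [Finset.card_insert_of_notMem haS]
            ring
        _ ≤ (1 + Real.exp K)⁻¹ * SE β h Λ σ (cyl S F) := by
            refine mul_le_mul_of_nonneg_left hIH (by positivity)
        _ ≤ SE β h Λ σ (cyl (insert a S) F) := this

/-- Finite-volume FKG inequality for two single-site increasing events given a cylinder. -/
lemma SE_fkg (hβ : 0 ≤ β) (S : Finset (ℤ × ℤ)) (F : Cfg2) {p q : ℤ × ℤ}
    (hp : p ∉ S) (hq : q ∉ S) (hpq : p ≠ q) :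
    SE β h Λ σ (cyl (insert p S) (Function.update F p true))
      * SE β h Λ σ (cyl (insert q S) (Function.update F q true))
    ≤ SE β h Λ σ (cyl S F)
      * SE β h Λ σ (cyl (insert p (insert q S))
          (Function.update (Function.update F q true) p true)) := by
  set w := fun τ : ↥Λ → Bool => isingWeight β h Λ σ (fill Λ σ τ) with hw
  set μf : (↥Λ → Bool) → ℝ := fun τ => if fill Λ σ τ ∈ cyl S F then w τ else 0 with hμf
  set ff : (↥Λ → Bool) → ℝ := fun τ => if fill Λ σ τ p = true then 1 else 0 with hff
  set gg : (↥Λ → Bool) → ℝ := fun τ => if fill Λ σ τ q = true then 1 else 0 with hgg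
  have hμ0 : 0 ≤ μf := by
    intro τ
    simp only [hμf]
    split
    · exact (isingWeight_pos _ _ _ _ _).le
    · exact le_rfl
  have hf0 : 0 ≤ ff := by
    intro τ; simp only [hff]; split <;> norm_num
  have hg0 : 0 ≤ gg := by
    intro τ; simp only [hgg]; split <;> norm_num
  have hmono : ∀ (r : ℤ × ℤ), Monotone (fun τ : ↥Λ → Bool => if fill Λ σ τ r = true then (1:ℝ) else 0) := by
    intro r τ₁ τ₂ hle
    dsimp only
    by_cases h1 : fill Λ σ τ₁ r = true
    · have h2 : fill Λ σ τ₂ r = true := by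
        have := fill_mono Λ σ hle r
        rw [h1] at this
        exact le_antisymm (Bool.le_true _) this
      rw [if_pos h1, if_pos h2]
    · rw [if_neg h1]
      split <;> norm_num
  have hlat : ∀ a b, μf a * μf b ≤ μf (a ⊓ b) * μf (a ⊔ b) := by
    intro a b
    by_cases ha : fill Λ σ a ∈ cyl S F
    · by_cases hb : fill Λ σ b ∈ cyl S F
      · have hinf : fill Λ σ (a ⊓ b) ∈ cyl S F := by
          rw [fill_inf]
          intro i hi
          rw [Pi.inf_apply, ha i hi, hb i hi, inf_idem]
        have hsup : fill Λ σ (a ⊔ b) ∈ cyl S F := by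
          rw [fill_sup]
          intro i hi
          rw [Pi.sup_apply, ha i hi, hb i hi, sup_idem]
        simp only [hμf, if_pos ha, if_pos hb, if_pos hinf, if_pos hsup, hw]
        rw [fill_inf, fill_sup]
        exact isingWeight_logsup β h hβ Λ σ _ _
      · simp only [hμf, if_neg hb, mul_zero]
        exact mul_nonneg (hμ0 _) (hμ0 _)
    · simp only [hμf, if_neg ha, zero_mul]
      exact mul_nonneg (hμ0 _) (hμ0 _)
  have hfkg := fkg (μ := μf) (f := ff) (g := gg) hμ0 hf0 hg0 (hmono p) (hmono q) hlat
  -- identify the four sums with SE's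
  have hid1 : ∑ τ : ↥Λ → Bool, μf τ * ff τ
      = SE β h Λ σ (cyl (insert p S) (Function.update F p true)) := by
    refine Finset.sum_congr rfl fun τ _ => ?_
    have hm : fill Λ σ τ ∈ cyl (insert p S) (Function.update F p true)
        ↔ (fill Λ σ τ p = true ∧ fill Λ σ τ ∈ cyl S F) := by
      rw [cyl_insert_update hp]
      exact Iff.rfl
    by_cases h1 : fill Λ σ τ ∈ cyl S F <;> by_cases h2 : fill Λ σ τ p = true <;>
      simp [hμf, hff, h1, h2, SE, hm, hw]
  have hid2 : ∑ τ : ↥Λ → Bool, μf τ * gg τ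
      = SE β h Λ σ (cyl (insert q S) (Function.update F q true)) := by
    refine Finset.sum_congr rfl fun τ _ => ?_
    have hm : fill Λ σ τ ∈ cyl (insert q S) (Function.update F q true)
        ↔ (fill Λ σ τ q = true ∧ fill Λ σ τ ∈ cyl S F) := by
      rw [cyl_insert_update hq]
      exact Iff.rfl
    by_cases h1 : fill Λ σ τ ∈ cyl S F <;> by_cases h2 : fill Λ σ τ q = true <;>
      simp [hμf, hgg, h1, h2, SE, hm, hw]
  have hid3 : ∑ τ : ↥Λ → Bool, μf τ = SE β h Λ σ (cyl S F) := rfl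
  have hid4 : ∑ τ : ↥Λ → Bool, μf τ * (ff τ * gg τ)
      = SE β h Λ σ (cyl (insert p (insert q S))
          (Function.update (Function.update F q true) p true)) := by
    refine Finset.sum_congr rfl fun τ _ => ?_
    have hpq' : p ∉ insert q S := by
      intro hc
      rcases Finset.mem_insert.mp hc with hc | hc
      · exact hpq hc
      · exact hp hc
    have hm : fill Λ σ τ ∈ cyl (insert p (insert q S))
          (Function.update (Function.update F q true) p true)
        ↔ (fill Λ σ τ p = true ∧ fill Λ σ τ ∈ cyl (insert q S) (Function.update F q true)) := by
      rw [cyl_insert_update hpq']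
      exact Iff.rfl
    have hm2 : fill Λ σ τ ∈ cyl (insert q S) (Function.update F q true)
        ↔ (fill Λ σ τ q = true ∧ fill Λ σ τ ∈ cyl S F) := by
      rw [cyl_insert_update hq]
      exact Iff.rfl
    by_cases h1 : fill Λ σ τ ∈ cyl S F <;> by_cases h2 : fill Λ σ τ p = true <;>
      by_cases h3 : fill Λ σ τ q = true <;>
      simp [hμf, hff, hgg, h1, h2, h3, SE, hm, hm2, hw]
  rw [hid1, hid2, hid3, hid4] at hfkg
  exact hfkg

end
end SP
namespace SP
noncomputable section
open MeasureTheory Filter Topology ProbabilityTheory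

/-! ### Transfer to the infinite-volume plus phase -/

def epsK (β h : ℝ) : ℝ := (1 + Real.exp (16 * β + 2 * |h|))⁻¹

lemma epsK_pos (β h : ℝ) : 0 < epsK β h := by unfold epsK; positivity

lemma measurable_lineProj : Measurable lineProj :=
  measurable_pi_lambda _ (fun i => measurable_pi_apply (i, 0))

lemma schonmann_prob (μ : Measure Cfg2) [IsProbabilityMeasure μ] :
    IsProbabilityMeasure (schonmann μ) :=
  Measure.isProbabilityMeasure_map measurable_lineProj.aemeasurable

lemma mem_box_iff {x : ℤ × ℤ} {m : ℕ} :
    x ∈ box m ↔ -(m:ℤ) ≤ x.1 ∧ x.1 ≤ m ∧ -(m:ℤ) ≤ x.2 ∧ x.2 ≤ m := by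
  cases x with
  | mk a b => simp [box, Finset.mem_Icc]; tauto

lemma exists_box_subset (S : Finset (ℤ × ℤ)) :
    ∃ m₀ : ℕ, ∀ m, m₀ ≤ m → ∀ x ∈ S, x ∈ box m := by
  refine ⟨S.sup (fun x => x.1.natAbs ⊔ x.2.natAbs), fun m hm x hx => ?_⟩
  have h1 : x.1.natAbs ⊔ x.2.natAbs ≤ m :=
    le_trans (Finset.le_sup (f := fun x : ℤ × ℤ => x.1.natAbs ⊔ x.2.natAbs) hx) hm
  have h2 : x.1.natAbs ≤ m := le_trans (le_max_left _ _) h1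
  have h3 : x.2.natAbs ≤ m := le_trans (le_max_right _ _) h1
  rw [mem_box_iff]
  omega

variable {β h : ℝ} {μp : Measure Cfg2}

lemma tendsto_fv_toReal (hμp : IsPlusPhase β h μp) (S : Finset (ℤ × ℤ)) (F : Cfg2) :
    Tendsto (fun m => (isingFV β h (box m) (fun _ => true) (cyl S F)).toReal) atTop
      (𝓝 ((μp (cyl S F)).toReal)) := by
  haveI := hμp.1
  have htend := hμp.2 S F
  have hne : μp (cyl S F) ≠ ⊤ := measure_ne_top _ _
  exact (ENNReal.tendsto_toReal hne).comp htend

lemma fv_toReal_eq (m : ℕ) (S : Finset (ℤ × ℤ)) (F : Cfg2) :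
    (isingFV β h (box m) (fun _ => true) (cyl S F)).toReal
      = SE β h (box m) (fun _ => true) (cyl S F) / Zfun β h (box m) (fun _ => true) := by
  rw [isingFV_apply β h _ _ (measurableSet_cyl S F), ENNReal.toReal_ofReal]
  exact div_nonneg (SE_nonneg _ _ _ _ _) (Zfun_pos β h _ _).le

/-- Positivity of 2D cylinder probabilities under the plus phase. -/
lemma mu_cyl_pos (hβ : 0 < β) (hμp : IsPlusPhase β h μp) (S : Finset (ℤ × ℤ)) (F : Cfg2) :
    epsK β h ^ S.card ≤ (μp (cyl S F)).toReal := by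
  obtain ⟨m₀, hm₀⟩ := exists_box_subset S
  refine ge_of_tendsto (tendsto_fv_toReal hμp S F) ?_
  rw [eventually_atTop]
  refine ⟨m₀, fun m hm => ?_⟩
  rw [fv_toReal_eq, le_div_iff₀ (Zfun_pos β h _ _)]
  have := SE_pos (β := β) (h := h) (Λ := box m) (σ := fun _ => true) hβ.le S (hm₀ m hm) F
  exact this

/-- FKG inequality for the plus phase, for cylinders and two extra plus spins. -/
lemma mu_fkg (hβ : 0 < β) (hμp : IsPlusPhase β h μp) (S : Finset (ℤ × ℤ)) (F : Cfg2)
    {p q : ℤ × ℤ} (hp : p ∉ S) (hq : q ∉ S) (hpq : p ≠ q) :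
    (μp (cyl (insert p S) (Function.update F p true))).toReal
      * (μp (cyl (insert q S) (Function.update F q true))).toReal
    ≤ (μp (cyl S F)).toReal
      * (μp (cyl (insert p (insert q S))
          (Function.update (Function.update F q true) p true))).toReal := by
  refine le_of_tendsto_of_tendsto'
    ((tendsto_fv_toReal hμp _ _).mul (tendsto_fv_toReal hμp _ _))
    ((tendsto_fv_toReal hμp _ _).mul (tendsto_fv_toReal hμp _ _)) (fun m => ?_)
  rw [fv_toReal_eq, fv_toReal_eq, fv_toReal_eq, fv_toReal_eq, div_mul_div_comm,
    div_mul_div_comm]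
  refine (div_le_div_iff_of_pos_right
    (mul_pos (Zfun_pos β h _ _) (Zfun_pos β h _ _))).mpr ?_
  exact SE_fkg hβ.le S F hp hq hpq

/-! ### Line-level facts for the Schonmann projection -/

def emb (i : ℤ) : ℤ × ℤ := (i, 0)

lemma emb_inj : Function.Injective emb := fun i j hij => congrArg Prod.fst hij

lemma preimage_cyl (s : Finset ℤ) (f : ℤ → Bool) :
    lineProj ⁻¹' (cyl s f) = cyl (s.image emb) (fun x => f x.1) := by
  ext η
  simp only [Set.mem_preimage, cyl, Set.mem_setOf_eq, Finset.mem_image]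
  constructor
  · rintro hη x ⟨i, hi, rfl⟩
    exact hη i hi
  · intro hη i hi
    exact hη (emb i) ⟨i, hi, rfl⟩

lemma schonmann_cyl (μ : Measure Cfg2) (s : Finset ℤ) (f : ℤ → Bool) :
    schonmann μ (cyl s f) = μ (cyl (s.image emb) (fun x => f x.1)) := by
  unfold schonmann
  rw [Measure.map_apply measurable_lineProj (measurableSet_cyl s f), preimage_cyl]

lemma update_emb_eq (f : ℤ → Bool) (j i : ℤ) (v : Bool) :
    Function.update (fun x : ℤ × ℤ => f x.1) (emb j) v (emb i) = Function.update f j v i := by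
  by_cases hij : i = j
  · subst hij
    rw [Function.update_self, Function.update_self]
  · rw [Function.update_of_ne (fun hc => hij (emb_inj hc)),
      Function.update_of_ne hij]
    rfl

lemma update2_emb_eq (f : ℤ → Bool) (j k i : ℤ) (v w : Bool) :
    Function.update (Function.update (fun x : ℤ × ℤ => f x.1) (emb k) w) (emb j) v (emb i)
      = Function.update (Function.update f k w) j v i := by
  by_cases hij : i = j
  · subst hij
    rw [Function.update_self, Function.update_self]
  · rw [Function.update_of_ne (fun hc => hij (emb_inj hc)), Function.update_of_ne hij,
      update_emb_eq]

/-- The image cylinder of an updated line cylinder. -/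
lemma schonmann_cyl_update (μ : Measure Cfg2) {j : ℤ} {s : Finset ℤ} (hj : j ∉ s)
    (f : ℤ → Bool) (v : Bool) :
    schonmann μ (cyl (insert j s) (Function.update f j v))
      = μ (cyl (insert (emb j) (s.image emb))
          (Function.update (fun x => f x.1) (emb j) v)) := by
  rw [schonmann_cyl, Finset.image_insert]
  congr 1
  apply cyl_congr
  intro x hx
  have hex : ∃ i : ℤ, x = emb i := by
    rcases Finset.mem_insert.mp hx with rfl | hxs
    · exact ⟨j, rfl⟩
    · obtain ⟨i, _, rfl⟩ := Finset.mem_image.mp hxs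
      exact ⟨i, rfl⟩
  obtain ⟨i, rfl⟩ := hex
  exact (update_emb_eq f j i v).symm

/-- Double update version. -/
lemma schonmann_cyl_update2 (μ : Measure Cfg2) {j k : ℤ} {s : Finset ℤ}
    (hj : j ∉ insert k s) (hk : k ∉ s) (f : ℤ → Bool) (v w : Bool) :
    schonmann μ (cyl (insert j (insert k s)) (Function.update (Function.update f k w) j v))
      = μ (cyl (insert (emb j) (insert (emb k) (s.image emb)))
          (Function.update (Function.update (fun x => f x.1) (emb k) w) (emb j) v)) := by
  rw [schonmann_cyl, Finset.image_insert, Finset.image_insert]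
  congr 1
  apply cyl_congr
  intro x hx
  have hex : ∃ i : ℤ, x = emb i := by
    rcases Finset.mem_insert.mp hx with rfl | hx2
    · exact ⟨j, rfl⟩
    · rcases Finset.mem_insert.mp hx2 with rfl | hxs
      · exact ⟨k, rfl⟩
      · obtain ⟨i, _, rfl⟩ := Finset.mem_image.mp hxs
        exact ⟨i, rfl⟩
  obtain ⟨i, rfl⟩ := hex
  exact (update2_emb_eq f j k i v w).symm

/-- Positivity for line cylinders. -/
lemma line_pos (hβ : 0 < β) (hμp : IsPlusPhase β h μp) (s : Finset ℤ) (f : ℤ → Bool) :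
    0 < (schonmann μp (cyl s f)).toReal := by
  rw [schonmann_cyl]
  calc (0:ℝ) < epsK β h ^ (s.image emb).card := pow_pos (epsK_pos β h) _
    _ ≤ _ := mu_cyl_pos hβ hμp _ _

/-- FKG for line cylinders. -/
lemma line_fkg (hβ : 0 < β) (hμp : IsPlusPhase β h μp) (s : Finset ℤ) (f : ℤ → Bool)
    {p q : ℤ} (hp : p ∉ s) (hq : q ∉ s) (hpq : p ≠ q) :
    (schonmann μp (cyl (insert p s) (Function.update f p true))).toReal
      * (schonmann μp (cyl (insert q s) (Function.update f q true))).toReal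
    ≤ (schonmann μp (cyl s f)).toReal
      * (schonmann μp (cyl (insert p (insert q s))
          (Function.update (Function.update f q true) p true))).toReal := by
  have hp' : p ∉ insert q s := by
    intro hc
    rcases Finset.mem_insert.mp hc with hc | hc
    · exact hpq hc
    · exact hp hc
  rw [schonmann_cyl_update μp hp f true, schonmann_cyl_update μp hq f true,
    schonmann_cyl μp s f, schonmann_cyl_update2 μp hp' hq f true true]
  exact mu_fkg hβ hμp (s.image emb) (fun x => f x.1)
    (fun hc => hp (by { obtain ⟨i, hi, he⟩ := Finset.mem_image.mp hc; rwa [← emb_inj he] }))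
    (fun hc => hq (by { obtain ⟨i, hi, he⟩ := Finset.mem_image.mp hc; rwa [← emb_inj he] }))
    (fun hc => hpq (emb_inj hc))

end
end SP
namespace SP
noncomputable section
open MeasureTheory Filter Topology ProbabilityTheory

variable {β h : ℝ} {μp : Measure Cfg2}

/-- Probability of a line cylinder. -/
def rhoL (μp : Measure Cfg2) (s : Finset ℤ) (f : ℤ → Bool) : ℝ :=
  (schonmann μp (cyl s f)).toReal

/-- Conditional probability of `η 0 = +` given the cylinder. -/
def cpL (μp : Measure Cfg2) (s : Finset ℤ) (f : ℤ → Bool) : ℝ :=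
  rhoL μp (insert 0 s) (Function.update f 0 true) / rhoL μp s f

lemma rhoL_pos (hβ : 0 < β) (hμp : IsPlusPhase β h μp) (s : Finset ℤ) (f : ℤ → Bool) :
    0 < rhoL μp s f := line_pos hβ hμp s f

lemma rhoL_congr {s : Finset ℤ} {f g : ℤ → Bool} (hfg : ∀ i ∈ s, f i = g i) :
    rhoL μp s f = rhoL μp s g := by
  unfold rhoL
  rw [cyl_congr hfg]

lemma rhoL_add (hμp : IsPlusPhase β h μp) {j : ℤ} {s : Finset ℤ} (hj : j ∉ s) (f : ℤ → Bool) :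
    rhoL μp s f = rhoL μp (insert j s) (Function.update f j true)
      + rhoL μp (insert j s) (Function.update f j false) := by
  haveI := hμp.1
  haveI := schonmann_prob μp
  exact rho_add (schonmann μp) hj f

lemma rhoL_le (hμp : IsPlusPhase β h μp) {s t : Finset ℤ} {f g : ℤ → Bool}
    (hst : s ⊆ t) (hfg : ∀ i ∈ s, g i = f i) : rhoL μp t g ≤ rhoL μp s f := by
  haveI := hμp.1
  haveI := schonmann_prob μp
  exact rho_mono (schonmann μp) hst hfg

lemma cpL_nonneg (hβ : 0 < β) (hμp : IsPlusPhase β h μp) (s : Finset ℤ) (f : ℤ → Bool) :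
    0 ≤ cpL μp s f :=
  div_nonneg (rhoL_pos hβ hμp _ _).le (rhoL_pos hβ hμp _ _).le

lemma cpL_le_one (hβ : 0 < β) (hμp : IsPlusPhase β h μp) {s : Finset ℤ} (hs : (0:ℤ) ∉ s)
    (f : ℤ → Bool) : cpL μp s f ≤ 1 := by
  unfold cpL
  rw [div_le_one (rhoL_pos hβ hμp _ _)]
  refine rhoL_le hμp (Finset.subset_insert 0 s) (fun i hi => ?_)
  exact Function.update_of_ne (fun hc => hs (by rwa [hc] at hi)) _ _

lemma cpL_congr (hβ : 0 < β) (hμp : IsPlusPhase β h μp) {s : Finset ℤ} {f g : ℤ → Bool}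
    (hfg : ∀ i ∈ s, f i = g i) : cpL μp s f = cpL μp s g := by
  unfold cpL
  rw [rhoL_congr hfg, rhoL_congr (s := insert 0 s)
    (f := Function.update f 0 true) (g := Function.update g 0 true) ?_]
  intro i hi
  rcases Finset.mem_insert.mp hi with rfl | his
  · rw [Function.update_self, Function.update_self]
  · by_cases hi0 : i = 0
    · subst hi0
      rw [Function.update_self, Function.update_self]
    · rw [Function.update_of_ne hi0, Function.update_of_ne hi0]
      exact hfg i his

lemma cpL_compl (hβ : 0 < β) (hμp : IsPlusPhase β h μp) {s : Finset ℤ} (hs : (0:ℤ) ∉ s)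
    (f : ℤ → Bool) :
    rhoL μp (insert 0 s) (Function.update f 0 false) / rhoL μp s f = 1 - cpL μp s f := by
  have hadd := rhoL_add hμp hs f
  have hpos := rhoL_pos hβ hμp s f
  unfold cpL
  field_simp
  linarith [hadd]

/-- The key exchange inequality coming from FKG. -/
lemma key_ineq (hβ : 0 < β) (hμp : IsPlusPhase β h μp) {s : Finset ℤ} {j : ℤ}
    (hs : (0:ℤ) ∉ s) (hj : j ∉ s) (hj0 : j ≠ 0) (f : ℤ → Bool) :
    rhoL μp (insert 0 (insert j s)) (Function.update (Function.update f j false) 0 true)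
        * rhoL μp (insert j s) (Function.update f j true)
      ≤ rhoL μp (insert 0 (insert j s)) (Function.update (Function.update f j true) 0 true)
        * rhoL μp (insert j s) (Function.update f j false) := by
  have hfkg : rhoL μp (insert 0 s) (Function.update f 0 true)
        * rhoL μp (insert j s) (Function.update f j true)
      ≤ rhoL μp s f * rhoL μp (insert 0 (insert j s))
          (Function.update (Function.update f j true) 0 true) :=
    line_fkg hβ hμp s f (p := 0) (q := j) hs hj (Ne.symm hj0)
  have hDadd := rhoL_add hμp hj f
  have hNadd := rhoL_add (μp := μp) hμp (j := j) (s := insert 0 s)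
    (fun hc => by rcases Finset.mem_insert.mp hc with hc | hc; exacts [hj0 hc, hj hc])
    (Function.update f 0 true)
  rw [Finset.insert_comm j 0 s] at hNadd
  rw [← Function.update_comm hj0 true true f, ← Function.update_comm hj0 false true f] at hNadd
  set Nt := rhoL μp (insert 0 (insert j s)) (Function.update (Function.update f j true) 0 true)
  set Nf := rhoL μp (insert 0 (insert j s)) (Function.update (Function.update f j false) 0 true)
  set Dt := rhoL μp (insert j s) (Function.update f j true)
  set Df := rhoL μp (insert j s) (Function.update f j false)
  rw [hNadd, hDadd] at hfkg
  nlinarith [hfkg]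

/-- Ratio version of the key inequality. -/
lemma key_ratio (hβ : 0 < β) (hμp : IsPlusPhase β h μp) {s : Finset ℤ} {j : ℤ}
    (hs : (0:ℤ) ∉ s) (hj : j ∉ s) (hj0 : j ≠ 0) (f : ℤ → Bool) :
    cpL μp (insert j s) (Function.update f j false)
      ≤ cpL μp (insert j s) (Function.update f j true) := by
  unfold cpL
  rw [div_le_div_iff₀ (rhoL_pos hβ hμp _ _) (rhoL_pos hβ hμp _ _)]
  exact key_ineq hβ hμp hs hj hj0 f

/-- Conditioning on one more `+` (resp. `-`) spin increases (resp. decreases) `cpL`. -/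
lemma step_ratio (hβ : 0 < β) (hμp : IsPlusPhase β h μp) {s : Finset ℤ} {j : ℤ}
    (hs : (0:ℤ) ∉ s) (hj : j ∉ s) (hj0 : j ≠ 0) (f : ℤ → Bool) :
    cpL μp (insert j s) (Function.update f j false) ≤ cpL μp s f
      ∧ cpL μp s f ≤ cpL μp (insert j s) (Function.update f j true) := by
  have hkey := key_ineq hβ hμp hs hj hj0 f
  have hDadd := rhoL_add hμp hj f
  have hNadd := rhoL_add (μp := μp) hμp (j := j) (s := insert 0 s)
    (fun hc => by rcases Finset.mem_insert.mp hc with hc | hc; exacts [hj0 hc, hj hc])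
    (Function.update f 0 true)
  rw [Finset.insert_comm j 0 s] at hNadd
  rw [← Function.update_comm hj0 true true f, ← Function.update_comm hj0 false true f] at hNadd
  have hNt := rhoL_pos hβ hμp (insert 0 (insert j s))
    (Function.update (Function.update f j true) 0 true)
  have hNf := rhoL_pos hβ hμp (insert 0 (insert j s))
    (Function.update (Function.update f j false) 0 true)
  have hDt := rhoL_pos hβ hμp (insert j s) (Function.update f j true)
  have hDf := rhoL_pos hβ hμp (insert j s) (Function.update f j false)
  constructor
  · unfold cpL
    rw [hNadd, hDadd, div_le_div_iff₀ hDf (by linarith)]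
    nlinarith [hkey]
  · unfold cpL
    rw [hNadd, hDadd, div_le_div_iff₀ (by linarith) hDt]
    nlinarith [hkey]

/-- Monotonicity of `cpL` in the conditioning values. -/
lemma cp_mono_aux (hβ : 0 < β) (hμp : IsPlusPhase β h μp) (k : ℕ) :
    ∀ (s : Finset ℤ) (f g : ℤ → Bool), (0:ℤ) ∉ s → (∀ i ∈ s, f i ≤ g i) →
      (s.filter (fun i => f i ≠ g i)).card = k → cpL μp s f ≤ cpL μp s g := by
  classical
  induction k with
  | zero =>
      intro s f g hs hfg hcard
      have hall : ∀ i ∈ s, f i = g i := by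
        intro i hi
        by_contra hne
        have : i ∈ s.filter (fun i => f i ≠ g i) := Finset.mem_filter.mpr ⟨hi, hne⟩
        rw [Finset.card_eq_zero.mp hcard] at this
        exact absurd this (Finset.notMem_empty i)
      exact le_of_eq (cpL_congr hβ hμp hall)
  | succ k IH =>
      intro s f g hs hfg hcard
      have hne : (s.filter (fun i => f i ≠ g i)).Nonempty := by
        rw [← Finset.card_pos, hcard]
        exact Nat.succ_pos k
      obtain ⟨i₀, hi₀⟩ := hne
      have hi₀s : i₀ ∈ s := (Finset.mem_filter.mp hi₀).1
      have hi₀ne : f i₀ ≠ g i₀ := (Finset.mem_filter.mp hi₀).2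
      have hi₀le : f i₀ ≤ g i₀ := hfg i₀ hi₀s
      have hbool : ∀ a b : Bool, a ≤ b → a ≠ b → a = false ∧ b = true := by decide
      obtain ⟨hf0, hg0⟩ := hbool _ _ hi₀le hi₀ne
      have hi₀0 : i₀ ≠ 0 := fun hc => hs (hc ▸ hi₀s)
      have hs' : (0:ℤ) ∉ s.erase i₀ := fun hc => hs (Finset.mem_of_mem_erase hc)
      have hi₀e : i₀ ∉ s.erase i₀ := Finset.notMem_erase i₀ s
      have hins : insert i₀ (s.erase i₀) = s := Finset.insert_erase hi₀s
      set f' := Function.update f i₀ true with hf'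
      -- step 1 : cpL s f ≤ cpL s f'
      have step1 : cpL μp s f ≤ cpL μp s f' := by
        have hupdf : Function.update f i₀ false = f := by
          rw [← hf0]
          exact Function.update_eq_self i₀ f
        have := key_ratio hβ hμp hs' hi₀e hi₀0 f
        rwa [hins, hupdf] at this
      -- step 2 : cpL s f' ≤ cpL s g by IH
      have step2 : cpL μp s f' ≤ cpL μp s g := by
        refine IH s f' g hs (fun i hi => ?_) ?_
        · by_cases hii : i = i₀
          · subst hii
            rw [hf', Function.update_self, hg0]
          · rw [hf', Function.update_of_ne hii]
            exact hfg i hi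
        · have hfilter : s.filter (fun i => f' i ≠ g i)
              = (s.filter (fun i => f i ≠ g i)).erase i₀ := by
            ext i
            simp only [Finset.mem_filter, Finset.mem_erase]
            constructor
            · intro ⟨his, hne'⟩
              have hii : i ≠ i₀ := by
                intro hc
                subst hc
                rw [hf', Function.update_self, hg0] at hne'
                exact hne' rfl
              rw [hf', Function.update_of_ne hii] at hne'
              exact ⟨hii, his, hne'⟩
            · intro ⟨hii, his, hne'⟩
              rw [hf', Function.update_of_ne hii]
              exact ⟨his, hne'⟩
          rw [hfilter, Finset.card_erase_of_mem hi₀, hcard]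
          rfl
      exact le_trans step1 step2

lemma cp_mono (hβ : 0 < β) (hμp : IsPlusPhase β h μp) {s : Finset ℤ} {f g : ℤ → Bool}
    (hs : (0:ℤ) ∉ s) (hfg : ∀ i ∈ s, f i ≤ g i) : cpL μp s f ≤ cpL μp s g :=
  cp_mono_aux hβ hμp _ s f g hs hfg rfl

end
end SP
namespace SP
noncomputable section
open MeasureTheory Filter Topology ProbabilityTheory

variable {β h : ℝ} {μp : Measure Cfg2}

def pastFun (n : ℕ) (b : Bool) (ω : Past Bool) : ℤ → Bool :=
  fun i => if -(n:ℤ) ≤ i then ω (i.natAbs - 1) else b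

def sIcc (n l : ℕ) : Finset ℤ := Finset.Icc (-(n:ℤ) - l) (-1)

lemma zero_not_mem_sIcc (n l : ℕ) : (0:ℤ) ∉ sIcc n l := by
  simp [sIcc]

lemma sIcc_succ (n l : ℕ) : sIcc n (l+1) = insert (-(n:ℤ) - l - 1) (sIcc n l) := by
  ext i
  simp only [sIcc, Finset.mem_Icc, Finset.mem_insert]
  push_cast
  omega

lemma not_mem_sIcc_new (n l : ℕ) : (-(n:ℤ) - l - 1) ∉ sIcc n l := by
  simp only [sIcc, Finset.mem_Icc]
  omega

lemma new_ne_zero (n l : ℕ) : (-(n:ℤ) - l - 1) ≠ 0 := by omega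

lemma sIcc_shift (n l : ℕ) : sIcc (n+1) l = sIcc n (l+1) := by
  ext i
  simp only [sIcc, Finset.mem_Icc]
  push_cast
  omega

lemma pastEvt_eq (n l : ℕ) (b : Bool) (ω : Past Bool) :
    pastEvt n l b ω = cyl (sIcc n l) (pastFun n b ω) := by
  ext η
  simp only [pastEvt, Set.mem_setOf_eq, cyl, sIcc, Finset.mem_Icc, pastFun]
  constructor
  · rintro ⟨h1, h2⟩ i ⟨hl, hr⟩
    by_cases hni : -(n:ℤ) ≤ i
    · rw [if_pos hni]
      exact h1 i hni hr
    · rw [if_neg hni]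
      exact h2 i (by omega) (by omega)
  · intro hc
    constructor
    · intro i h1 h2
      have := hc i ⟨by omega, h2⟩
      rwa [if_pos h1] at this
    · intro i h1 h2
      have := hc i ⟨by omega, by omega⟩
      rwa [if_neg (by omega)] at this

/-- Identification of the elementary conditional probability with `cpL`-type ratios. -/
lemma condProbR_eq (hμp : IsPlusPhase β h μp) {s : Finset ℤ} (hs : (0:ℤ) ∉ s)
    (f : ℤ → Bool) (a : Bool) :
    condProbR (schonmann μp) {η | η 0 = a} (cyl s f)
      = rhoL μp (insert 0 s) (Function.update f 0 a) / rhoL μp s f := by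
  unfold condProbR
  rw [ProbabilityTheory.cond_apply (measurableSet_cyl s f)]
  have hint : cyl s f ∩ {η : ZSeq Bool | η 0 = a}
      = cyl (insert 0 s) (Function.update f 0 a) := by
    ext η
    simp only [Set.mem_inter_iff, cyl, Set.mem_setOf_eq, Finset.mem_insert]
    constructor
    · rintro ⟨h1, h2⟩ i hi
      rcases hi with rfl | his
      · rw [Function.update_self]
        exact h2
      · rw [Function.update_of_ne (fun hc => hs (by rwa [hc] at his))]
        exact h1 i his
    · intro hη
      refine ⟨fun i hi => ?_, ?_⟩
      · have := hη i (Or.inr hi)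
        rwa [Function.update_of_ne (fun hc => hs (by rwa [hc] at hi))] at this
      · have := hη 0 (Or.inl rfl)
        rwa [Function.update_self] at this
  rw [hint, ENNReal.toReal_mul, ENNReal.toReal_inv]
  unfold rhoL
  rw [div_eq_inv_mul]

/-! ### Measurability via finite dependence -/

lemma measurable_of_depends {J : Finset ℕ} {φ : Past Bool → ℝ}
    (hφ : ∀ ω ω' : Past Bool, (∀ k ∈ J, ω k = ω' k) → φ ω = φ ω') : Measurable φ := by
  classical
  set π : Past Bool → (↥J → Bool) := fun ω k => ω k with hπ
  have hπm : Measurable π := measurable_pi_lambda _ (fun k => measurable_pi_apply _)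
  set ψ : (↥J → Bool) → ℝ :=
    fun u => φ (fun k => if hk : k ∈ J then u ⟨k, hk⟩ else false) with hψ
  have hfac : φ = ψ ∘ π := by
    funext ω
    exact hφ ω _ (fun k hk => by simp [hψ, hπ, dif_pos hk])
  rw [hfac]
  exact (measurable_of_countable ψ).comp hπm

lemma pastFun_congr {n : ℕ} {b : Bool} {s : Finset ℤ} {ω ω' : Past Bool}
    (hJ : ∀ k ∈ s.image (fun i : ℤ => i.natAbs - 1), ω k = ω' k) :
    ∀ i ∈ s, pastFun n b ω i = pastFun n b ω' i := by
  intro i hi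
  unfold pastFun
  split
  · exact hJ _ (Finset.mem_image_of_mem _ hi)
  · rfl

lemma measurable_rhoL_pastFun (μp : Measure Cfg2) (n : ℕ) (b : Bool) (s : Finset ℤ) :
    Measurable (fun ω : Past Bool => rhoL μp s (pastFun n b ω)) := by
  apply measurable_of_depends (J := s.image (fun i : ℤ => i.natAbs - 1))
  intro ω ω' hJ
  exact rhoL_congr (pastFun_congr hJ)

lemma measurable_rhoL_num_pastFun (μp : Measure Cfg2) (n : ℕ) (b : Bool) {s : Finset ℤ}
    (hs : (0:ℤ) ∉ s) :
    Measurable (fun ω : Past Bool =>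
      rhoL μp (insert 0 s) (Function.update (pastFun n b ω) 0 true)) := by
  apply measurable_of_depends (J := s.image (fun i : ℤ => i.natAbs - 1))
  intro ω ω' hJ
  apply rhoL_congr
  intro i hi
  rcases Finset.mem_insert.mp hi with rfl | his
  · rw [Function.update_self, Function.update_self]
  · have hi0 : i ≠ 0 := fun hc => hs (by rwa [hc] at his)
    rw [Function.update_of_ne hi0, Function.update_of_ne hi0]
    exact pastFun_congr hJ i his

lemma measurable_cpL_pastFun (μp : Measure Cfg2) (n : ℕ) (b : Bool) {s : Finset ℤ}
    (hs : (0:ℤ) ∉ s) :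
    Measurable (fun ω : Past Bool => cpL μp s (pastFun n b ω)) :=
  (measurable_rhoL_num_pastFun μp n b hs).div (measurable_rhoL_pastFun μp n b s)

/-- `pastFun` is monotone in `ω` and compares across `b`. -/
lemma pastFun_mono {n : ℕ} {b : Bool} {ω ω' : Past Bool} (hω : ω ≤ ω') :
    ∀ i, pastFun n b ω i ≤ pastFun n b ω' i := by
  intro i
  unfold pastFun
  split
  · exact hω _
  · exact le_rfl

lemma pastFun_false_le_true {n : ℕ} (ω : Past Bool) :
    ∀ i, pastFun n false ω i ≤ pastFun n true ω i := by
  intro i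
  unfold pastFun
  split
  · exact le_rfl
  · exact Bool.false_le _

/-- Comparing `pastFun (n+1)` with `pastFun n` : for `b = true` the former is smaller. -/
lemma pastFun_succ_le {n : ℕ} (ω : Past Bool) :
    ∀ i, pastFun (n+1) true ω i ≤ pastFun n true ω i := by
  intro i
  unfold pastFun
  by_cases h1 : -(n:ℤ) ≤ i
  · rw [if_pos h1, if_pos (by push_cast; omega)]
  · rw [if_neg h1]
    split
    · exact Bool.le_true _
    · exact le_rfl

lemma pastFun_le_succ {n : ℕ} (ω : Past Bool) :
    ∀ i, pastFun n false ω i ≤ pastFun (n+1) false ω i := by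
  intro i
  unfold pastFun
  by_cases h1 : -(n:ℤ) ≤ i
  · rw [if_pos h1, if_pos (by push_cast; omega)]
  · rw [if_neg h1]
    split
    · exact Bool.false_le _
    · exact le_rfl

/-- Value of `pastFun` at the newly added far site. -/
lemma pastFun_new (n l : ℕ) (b : Bool) (ω : Past Bool) :
    pastFun n b ω (-(n:ℤ) - l - 1) = b := by
  unfold pastFun
  rw [if_neg (by omega)]

end
end SP
namespace SP
noncomputable section
open MeasureTheory Filter Topology ProbabilityTheory

variable {β h : ℝ} {μp : Measure Cfg2}

def gseq (μp : Measure Cfg2) (b : Bool) (n l : ℕ) (ω : Past Bool) : ℝ :=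
  cpL μp (sIcc n l) (pastFun n b ω)

def LseqP (μp : Measure Cfg2) (n : ℕ) (ω : Past Bool) : ℝ := ⨆ l, gseq μp true n l ω
def LseqM (μp : Measure Cfg2) (n : ℕ) (ω : Past Bool) : ℝ := ⨅ l, gseq μp false n l ω
def PP (μp : Measure Cfg2) (ω : Past Bool) : ℝ := ⨅ n, LseqP μp n ω
def PM (μp : Measure Cfg2) (ω : Past Bool) : ℝ := ⨆ n, LseqM μp n ω

section Facts
variable (hβ : 0 < β) (hμp : IsPlusPhase β h μp)
include hβ hμp

lemma gseq_nonneg (b : Bool) (n l : ℕ) (ω : Past Bool) : 0 ≤ gseq μp b n l ω :=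
  cpL_nonneg hβ hμp _ _

lemma gseq_le_one (b : Bool) (n l : ℕ) (ω : Past Bool) : gseq μp b n l ω ≤ 1 :=
  cpL_le_one hβ hμp (zero_not_mem_sIcc n l) _

/-- The conditional probabilities are identified with `gseq`. -/
lemma condProbR_eq_gseq (b : Bool) (n l : ℕ) (ω : Past Bool) :
    condProbR (schonmann μp) {η | η 0 = true} (pastEvt n l b ω) = gseq μp b n l ω := by
  rw [pastEvt_eq, condProbR_eq hμp (zero_not_mem_sIcc n l) _ true]
  rfl

lemma condProbR_eq_gseq_false (b : Bool) (n l : ℕ) (ω : Past Bool) :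
    condProbR (schonmann μp) {η | η 0 = false} (pastEvt n l b ω) = 1 - gseq μp b n l ω := by
  rw [pastEvt_eq, condProbR_eq hμp (zero_not_mem_sIcc n l) _ false]
  exact cpL_compl hβ hμp (zero_not_mem_sIcc n l) _

/-- `gseq true` is nondecreasing in `l`. -/
lemma gseq_true_mono_l (n : ℕ) (ω : Past Bool) :
    Monotone (fun l => gseq μp true n l ω) := by
  apply monotone_nat_of_le_succ
  intro l
  have hstep := (step_ratio hβ hμp (zero_not_mem_sIcc n l) (not_mem_sIcc_new n l)
    (new_ne_zero n l) (pastFun n true ω)).2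
  have hcongr : cpL μp (insert (-(n:ℤ) - l - 1) (sIcc n l))
        (Function.update (pastFun n true ω) (-(n:ℤ) - l - 1) true)
      = cpL μp (insert (-(n:ℤ) - l - 1) (sIcc n l)) (pastFun n true ω) := by
    apply cpL_congr hβ hμp
    intro i hi
    by_cases hii : i = -(n:ℤ) - l - 1
    · subst hii
      rw [Function.update_self, pastFun_new]
    · rw [Function.update_of_ne hii]
  show gseq μp true n l ω ≤ gseq μp true n (l+1) ω
  unfold gseq
  rw [sIcc_succ]
  rw [hcongr] at hstep
  exact hstep

/-- `gseq false` is nonincreasing in `l`. -/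
lemma gseq_false_anti_l (n : ℕ) (ω : Past Bool) :
    Antitone (fun l => gseq μp false n l ω) := by
  apply antitone_nat_of_succ_le
  intro l
  have hstep := (step_ratio hβ hμp (zero_not_mem_sIcc n l) (not_mem_sIcc_new n l)
    (new_ne_zero n l) (pastFun n false ω)).1
  have hcongr : cpL μp (insert (-(n:ℤ) - l - 1) (sIcc n l))
        (Function.update (pastFun n false ω) (-(n:ℤ) - l - 1) false)
      = cpL μp (insert (-(n:ℤ) - l - 1) (sIcc n l)) (pastFun n false ω) := by
    apply cpL_congr hβ hμp
    intro i hi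
    by_cases hii : i = -(n:ℤ) - l - 1
    · subst hii
      rw [Function.update_self, pastFun_new]
    · rw [Function.update_of_ne hii]
  show gseq μp false n (l+1) ω ≤ gseq μp false n l ω
  unfold gseq
  rw [sIcc_succ]
  rw [hcongr] at hstep
  exact hstep

/-- Cross-`n` comparison for `b = true`. -/
lemma gseq_true_cross (n l : ℕ) (ω : Past Bool) :
    gseq μp true (n+1) l ω ≤ gseq μp true n (l+1) ω := by
  unfold gseq
  rw [sIcc_shift]
  exact cp_mono hβ hμp (zero_not_mem_sIcc n (l+1)) (fun i _ => pastFun_succ_le ω i)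

/-- Cross-`n` comparison for `b = false`. -/
lemma gseq_false_cross (n l : ℕ) (ω : Past Bool) :
    gseq μp false n (l+1) ω ≤ gseq μp false (n+1) l ω := by
  unfold gseq
  rw [sIcc_shift]
  exact cp_mono hβ hμp (zero_not_mem_sIcc n (l+1)) (fun i _ => pastFun_le_succ ω i)

lemma gseq_false_le_true (n l : ℕ) (ω : Past Bool) :
    gseq μp false n l ω ≤ gseq μp true n l ω :=
  cp_mono hβ hμp (zero_not_mem_sIcc n l) (fun i _ => pastFun_false_le_true ω i)

lemma gseq_mono_omega (b : Bool) (n l : ℕ) {ω ω' : Past Bool} (hω : ω ≤ ω') :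
    gseq μp b n l ω ≤ gseq μp b n l ω' :=
  cp_mono hβ hμp (zero_not_mem_sIcc n l) (fun i _ => pastFun_mono hω i)

/-! ### Limits in `l` -/

lemma bddAbove_gseq (b : Bool) (n : ℕ) (ω : Past Bool) :
    BddAbove (Set.range (fun l => gseq μp b n l ω)) := by
  refine ⟨1, ?_⟩
  rintro - ⟨l, rfl⟩
  exact gseq_le_one hβ hμp b n l ω

lemma bddBelow_gseq (b : Bool) (n : ℕ) (ω : Past Bool) :
    BddBelow (Set.range (fun l => gseq μp b n l ω)) := by
  refine ⟨0, ?_⟩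
  rintro - ⟨l, rfl⟩
  exact gseq_nonneg hβ hμp b n l ω

lemma tendsto_LseqP (n : ℕ) (ω : Past Bool) :
    Tendsto (fun l => gseq μp true n l ω) atTop (𝓝 (LseqP μp n ω)) :=
  tendsto_atTop_ciSup (gseq_true_mono_l hβ hμp n ω) (bddAbove_gseq hβ hμp true n ω)

lemma tendsto_LseqM (n : ℕ) (ω : Past Bool) :
    Tendsto (fun l => gseq μp false n l ω) atTop (𝓝 (LseqM μp n ω)) :=
  tendsto_atTop_ciInf (gseq_false_anti_l hβ hμp n ω) (bddBelow_gseq hβ hμp false n ω)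

lemma LseqP_le_one (n : ℕ) (ω : Past Bool) : LseqP μp n ω ≤ 1 :=
  ciSup_le (fun l => gseq_le_one hβ hμp true n l ω)

lemma LseqP_nonneg (n : ℕ) (ω : Past Bool) : 0 ≤ LseqP μp n ω :=
  le_trans (gseq_nonneg hβ hμp true n 0 ω)
    (le_ciSup (bddAbove_gseq hβ hμp true n ω) 0)

lemma LseqM_nonneg (n : ℕ) (ω : Past Bool) : 0 ≤ LseqM μp n ω :=
  le_ciInf (fun l => gseq_nonneg hβ hμp false n l ω)

lemma LseqM_le_one (n : ℕ) (ω : Past Bool) : LseqM μp n ω ≤ 1 :=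
  le_trans (ciInf_le (bddBelow_gseq hβ hμp false n ω) 0) (gseq_le_one hβ hμp false n 0 ω)

lemma LseqP_anti (ω : Past Bool) : Antitone (fun n => LseqP μp n ω) := by
  apply antitone_nat_of_succ_le
  intro n
  refine ciSup_le (fun l => ?_)
  exact le_trans (gseq_true_cross hβ hμp n l ω)
    (le_ciSup (bddAbove_gseq hβ hμp true n ω) (l+1))

lemma LseqM_mono (ω : Past Bool) : Monotone (fun n => LseqM μp n ω) := by
  apply monotone_nat_of_le_succ
  intro n
  refine le_ciInf (fun l => ?_)
  exact le_trans (ciInf_le (bddBelow_gseq hβ hμp false n ω) (l+1))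
    (gseq_false_cross hβ hμp n l ω)

lemma tendsto_PP (ω : Past Bool) :
    Tendsto (fun n => LseqP μp n ω) atTop (𝓝 (PP μp ω)) :=
  tendsto_atTop_ciInf (LseqP_anti hβ hμp ω)
    ⟨0, by rintro - ⟨n, rfl⟩; exact LseqP_nonneg hβ hμp n ω⟩

lemma tendsto_PM (ω : Past Bool) :
    Tendsto (fun n => LseqM μp n ω) atTop (𝓝 (PM μp ω)) :=
  tendsto_atTop_ciSup (LseqM_mono hβ hμp ω)
    ⟨1, by rintro - ⟨n, rfl⟩; exact LseqM_le_one hβ hμp n ω⟩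

lemma PP_nonneg (ω : Past Bool) : 0 ≤ PP μp ω :=
  le_ciInf (fun n => LseqP_nonneg hβ hμp n ω)

lemma PP_le_one (ω : Past Bool) : PP μp ω ≤ 1 :=
  le_trans (ciInf_le ⟨0, by rintro - ⟨n, rfl⟩; exact LseqP_nonneg hβ hμp n ω⟩ 0)
    (LseqP_le_one hβ hμp 0 ω)

lemma PM_nonneg (ω : Past Bool) : 0 ≤ PM μp ω :=
  le_trans (LseqM_nonneg hβ hμp 0 ω)
    (le_ciSup (f := fun n => LseqM μp n ω)
      ⟨1, by rintro - ⟨n, rfl⟩; exact LseqM_le_one hβ hμp n ω⟩ 0)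

lemma PM_le_one (ω : Past Bool) : PM μp ω ≤ 1 :=
  ciSup_le (fun n => LseqM_le_one hβ hμp n ω)

lemma LseqM_le_LseqP (n : ℕ) (ω : Past Bool) : LseqM μp n ω ≤ LseqP μp n ω :=
  le_trans (ciInf_le (bddBelow_gseq hβ hμp false n ω) 0)
    (le_trans (gseq_false_le_true hβ hμp n 0 ω)
      (le_ciSup (bddAbove_gseq hβ hμp true n ω) 0))

lemma PM_le_PP (ω : Past Bool) : PM μp ω ≤ PP μp ω := by
  refine ciSup_le (fun n => le_ciInf (fun m => ?_))
  calc LseqM μp n ω ≤ LseqM μp (n ⊔ m) ω := LseqM_mono hβ hμp ω le_sup_left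
    _ ≤ LseqP μp (n ⊔ m) ω := LseqM_le_LseqP hβ hμp _ ω
    _ ≤ LseqP μp m ω := LseqP_anti hβ hμp ω le_sup_right

lemma LseqP_mono_omega (n : ℕ) {ω ω' : Past Bool} (hω : ω ≤ ω') :
    LseqP μp n ω ≤ LseqP μp n ω' :=
  ciSup_le (fun l => le_trans (gseq_mono_omega hβ hμp true n l hω)
    (le_ciSup (bddAbove_gseq hβ hμp true n ω') l))

lemma LseqM_mono_omega (n : ℕ) {ω ω' : Past Bool} (hω : ω ≤ ω') :
    LseqM μp n ω ≤ LseqM μp n ω' :=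
  le_ciInf (fun l => le_trans (ciInf_le (bddBelow_gseq hβ hμp false n ω) l)
    (gseq_mono_omega hβ hμp false n l hω))

lemma PP_mono_omega {ω ω' : Past Bool} (hω : ω ≤ ω') : PP μp ω ≤ PP μp ω' :=
  le_ciInf (fun n => le_trans
    (ciInf_le ⟨0, by rintro - ⟨m, rfl⟩; exact LseqP_nonneg hβ hμp m ω⟩ n)
    (LseqP_mono_omega hβ hμp n hω))

lemma PM_mono_omega {ω ω' : Past Bool} (hω : ω ≤ ω') : PM μp ω ≤ PM μp ω' :=
  ciSup_le (fun n => le_trans (LseqM_mono_omega hβ hμp n hω)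
    (le_ciSup (f := fun m => LseqM μp m ω')
      ⟨1, by rintro - ⟨m, rfl⟩; exact LseqM_le_one hβ hμp m ω'⟩ n))

/-! ### Measurability -/

lemma measurable_gseq (b : Bool) (n l : ℕ) :
    Measurable (fun ω : Past Bool => gseq μp b n l ω) :=
  measurable_cpL_pastFun μp n b (zero_not_mem_sIcc n l)

lemma measurable_LseqP (n : ℕ) : Measurable (fun ω : Past Bool => LseqP μp n ω) := by
  refine measurable_of_tendsto_metrizable
    (f := fun l (ω : Past Bool) => gseq μp true n l ω)
    (fun l => measurable_gseq hβ hμp true n l) ?_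
  rw [tendsto_pi_nhds]
  exact fun ω => tendsto_LseqP hβ hμp n ω

lemma measurable_LseqM (n : ℕ) : Measurable (fun ω : Past Bool => LseqM μp n ω) := by
  refine measurable_of_tendsto_metrizable
    (f := fun l (ω : Past Bool) => gseq μp false n l ω)
    (fun l => measurable_gseq hβ hμp false n l) ?_
  rw [tendsto_pi_nhds]
  exact fun ω => tendsto_LseqM hβ hμp n ω

lemma measurable_PP : Measurable (fun ω : Past Bool => PP μp ω) := by
  refine measurable_of_tendsto_metrizable
    (f := fun n (ω : Past Bool) => LseqP μp n ω)
    (fun n => measurable_LseqP hβ hμp n) ?_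
  rw [tendsto_pi_nhds]
  exact fun ω => tendsto_PP hβ hμp ω

lemma measurable_PM : Measurable (fun ω : Past Bool => PM μp ω) := by
  refine measurable_of_tendsto_metrizable
    (f := fun n (ω : Past Bool) => LseqM μp n ω)
    (fun n => measurable_LseqM hβ hμp n) ?_
  rw [tendsto_pi_nhds]
  exact fun ω => tendsto_PM hβ hμp ω

end Facts
end
end SP
/-- For all `β > 0` and `h`, the double limits defining `P_{β,h}^{+,+}` and
`P_{β,h}^{+,-}` exist for every past and every symbol; they are attractive g-functions and
satisfy `P^{+,-}(+1|·) ≤ P^{+,+}(+1|·)` pointwise. -/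
theorem condG_exist_attractive_and_ordered
    (β h : ℝ) (hβ : 0 < β) (μp : Measure Cfg2) (hμp : IsPlusPhase β h μp) :
    ∃ Pp Pm : Bool → Past Bool → ℝ,
      IsCondG (schonmann μp) true Pp ∧ IsCondG (schonmann μp) false Pm ∧
      IsGFunction Pp ∧ IsGFunction Pm ∧
      Monotone (Pp true) ∧ Monotone (Pm true) ∧
      ∀ ω, Pm true ω ≤ Pp true ω := by
  classical
  refine ⟨fun a ω => if a = true then SP.PP μp ω else 1 - SP.PP μp ω,
    fun a ω => if a = true then SP.PM μp ω else 1 - SP.PM μp ω, ?_, ?_, ?_, ?_, ?_, ?_, ?_⟩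
  · -- IsCondG for the plus boundary condition
    intro a ω
    cases a with
    | true =>
        refine ⟨fun n => SP.LseqP μp n ω, fun n => ?_, ?_⟩
        · have he : (fun l => condProbR (schonmann μp) {η | η 0 = true} (pastEvt n l true ω))
              = fun l => SP.gseq μp true n l ω :=
            funext (fun l => SP.condProbR_eq_gseq hβ hμp true n l ω)
          rw [he]
          exact SP.tendsto_LseqP hβ hμp n ω
        · simpa using SP.tendsto_PP hβ hμp ω
    | false =>
        refine ⟨fun n => 1 - SP.LseqP μp n ω, fun n => ?_, ?_⟩
        · have he : (fun l => condProbR (schonmann μp) {η | η 0 = false} (pastEvt n l true ω))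
              = fun l => 1 - SP.gseq μp true n l ω :=
            funext (fun l => SP.condProbR_eq_gseq_false hβ hμp true n l ω)
          rw [he]
          exact tendsto_const_nhds.sub (SP.tendsto_LseqP hβ hμp n ω)
        · simpa using tendsto_const_nhds.sub (SP.tendsto_PP hβ hμp ω)
  · -- IsCondG for the minus boundary condition
    intro a ω
    cases a with
    | true =>
        refine ⟨fun n => SP.LseqM μp n ω, fun n => ?_, ?_⟩
        · have he : (fun l => condProbR (schonmann μp) {η | η 0 = true} (pastEvt n l false ω))
              = fun l => SP.gseq μp false n l ω :=
            funext (fun l => SP.condProbR_eq_gseq hβ hμp false n l ω)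
          rw [he]
          exact SP.tendsto_LseqM hβ hμp n ω
        · simpa using SP.tendsto_PM hβ hμp ω
    | false =>
        refine ⟨fun n => 1 - SP.LseqM μp n ω, fun n => ?_, ?_⟩
        · have he : (fun l => condProbR (schonmann μp) {η | η 0 = false} (pastEvt n l false ω))
              = fun l => 1 - SP.gseq μp false n l ω :=
            funext (fun l => SP.condProbR_eq_gseq_false hβ hμp false n l ω)
          rw [he]
          exact tendsto_const_nhds.sub (SP.tendsto_LseqM hβ hμp n ω)
        · simpa using tendsto_const_nhds.sub (SP.tendsto_PM hβ hμp ω)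
  · -- IsGFunction Pp
    constructor
    · intro a
      cases a with
      | true => simpa using SP.measurable_PP hβ hμp
      | false => have hmX : Measurable fun ω => (1:ℝ) - SP.PP μp ω := measurable_const.sub (SP.measurable_PP hβ hμp); simpa using hmX
    · intro ω
      constructor
      · rw [Fintype.sum_bool]
        simp
      · intro a
        cases a with
        | true =>
            simpa using ⟨SP.PP_nonneg hβ hμp ω, SP.PP_le_one hβ hμp ω⟩
        | false =>
            have h1 := SP.PP_nonneg hβ hμp ω
            have h2 := SP.PP_le_one hβ hμp ω
            simp only [if_neg (by decide : ¬(false = true)), Set.mem_Icc]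
            constructor <;> linarith
  · -- IsGFunction Pm
    constructor
    · intro a
      cases a with
      | true => simpa using SP.measurable_PM hβ hμp
      | false => have hmX : Measurable fun ω => (1:ℝ) - SP.PM μp ω := measurable_const.sub (SP.measurable_PM hβ hμp); simpa using hmX
    · intro ω
      constructor
      · rw [Fintype.sum_bool]
        simp
      · intro a
        cases a with
        | true =>
            simpa using ⟨SP.PM_nonneg hβ hμp ω, SP.PM_le_one hβ hμp ω⟩
        | false =>
            have h1 := SP.PM_nonneg hβ hμp ω
            have h2 := SP.PM_le_one hβ hμp ω
            simp only [if_neg (by decide : ¬(false = true)), Set.mem_Icc]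
            constructor <;> linarith
  · intro ω ω' hω
    simpa using SP.PP_mono_omega hβ hμp hω
  · intro ω ω' hω
    simpa using SP.PM_mono_omega hβ hμp hω
  · intro ω
    simpa using SP.PM_le_PP hβ hμp ω
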